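/- arXiv:1808.08879 — 4 statements merged into one kernel-verified Lean document; each statement's English description precedes it below -/
import Mathlib

section
/- Let b ≥ 1 and let p ∈ {0,1}* be a palindrome. Then the word ψ_b(p)·1 is a palindrome, and the word obtained from ψ_b(p) by removing its first letter (which is 1) is also a palindrome. -/
/-- The morphism ψ_b on letters: ψ_b(0) = 1·0^{b-1}, ψ_b(1) = 1·0^b
    (letters: `false` = 0, `true` = 1). -/
def psiL (b : ℕ) : Bool → List Bool
  | false => true :: List.replicate (b - 1) false
  | true  => true :: List.replicate b false

/-- The morphism ψ_b extended to words. -/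
def psiW (b : ℕ) (v : List Bool) : List Bool := v.flatMap (psiL b)

/-- A palindrome is a word equal to its reversal. -/
def IsPal {A : Type*} (w : List A) : Prop := w.reverse = w

/-- Palindromic length: minimal number of palindromes concatenating to `w`. -/
noncomputable def palLen {A : Type*} (w : List A) : ℕ :=
  sInf {k | ∃ l : List (List A), l.length = k ∧ (∀ p ∈ l, IsPal p) ∧ l.flatten = w}

/-- `v` is a factor of the infinite word `u`. -/
def FactorOf {A : Type*} (v : List A) (u : ℕ → A) : Prop :=
  ∃ i, v = (List.range v.length).map (fun k => u (i + k))

/-- A Sturmian word: exactly `n+1` factors of each length `n`. -/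
def Sturmian (u : ℕ → Bool) : Prop :=
  ∀ n, Set.ncard {v : List Bool | v.length = n ∧ FactorOf v u} = n + 1

/-- `u` has slope `α`: the frequency of the letter 1 (= `true`) is `α`. -/
def HasSlope (u : ℕ → Bool) (α : ℝ) : Prop :=
  Filter.Tendsto (fun n => (((List.range n).map u).count true : ℝ) / n)
    Filter.atTop (nhds α)

/-- The image of an infinite word under ψ_b. -/
noncomputable def psiInf (b : ℕ) (u : ℕ → Bool) : ℕ → Bool :=
  fun k => (((List.range (k + 1)).map u).flatMap (psiL b)).getD k false

/-- PL_u(n): maximal palindromic length of factors of length `n` of `u`. -/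
noncomputable def PL (u : ℕ → Bool) (n : ℕ) : ℕ :=
  sSup {k | ∃ v : List Bool, v.length = n ∧ FactorOf v u ∧ palLen v = k}

/-!
Each block `psiL b a ++ [true]` is a palindrome, so moving the trailing `true` of
`psiW b p ++ [true]` across the blocks one at a time reverses their order:
`(psiW b p ++ [true]).reverse = psiW b p.reverse ++ [true]`. Stripping the outer letters of
this palindrome leaves `(psiW b p).tail`.
-/

theorem IsPal.of_cons_append_singleton {α : Type*} {a c : α} {t : List α}
    (h : IsPal (a :: (t ++ [c]))) : IsPal t := by
  have hcons : c :: (t.reverse ++ [a]) = a :: (t ++ [c]) := by simpa [IsPal] using h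
  have hinner : t.reverse ++ [a] = t ++ [c] := (List.cons.inj hcons).2
  exact (List.append_inj hinner (by simp)).1

theorem IsPal.tail_of_append_singleton {α : Type*} {x : List α} {c : α}
    (h : IsPal (x ++ [c])) : IsPal x.tail := by
  cases x with
  | nil => rfl
  | cons a t => exact IsPal.of_cons_append_singleton h

theorem reverse_flatMap_append_singleton {α β : Type*} {f : α → List β} {c : β}
    (hf : ∀ a, IsPal (f a ++ [c])) (w : List α) :
    (w.flatMap f ++ [c]).reverse = w.reverse.flatMap f ++ [c] := by
  induction w with
  | nil => simp
  | cons a w ih =>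
    calc ((a :: w).flatMap f ++ [c]).reverse
      _ = (w.flatMap f ++ [c]).reverse ++ (f a).reverse := by simp
      _ = w.reverse.flatMap f ++ (f a ++ [c]).reverse := by rw [ih]; simp
      _ = (a :: w).reverse.flatMap f ++ [c] := by rw [hf a]; simp

theorem psiL_append_true_isPal (b : ℕ) (a : Bool) : IsPal (psiL b a ++ [true]) := by
  cases a <;> simp [IsPal, psiL, List.reverse_replicate]

theorem stmt3_general (b : ℕ) (p : List Bool) (hp : IsPal p) :
    IsPal (psiW b p ++ [true]) ∧ IsPal (psiW b p).tail := by
  have hpal : IsPal (psiW b p ++ [true]) := by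
    rw [IsPal, psiW, reverse_flatMap_append_singleton (psiL_append_true_isPal b), hp]
  exact ⟨hpal, hpal.tail_of_append_singleton⟩

theorem stmt3 (b : ℕ) (hb : 1 ≤ b) (p : List Bool) (hp : IsPal p) :
    IsPal (psiW b p ++ [true]) ∧ IsPal (psiW b p).tail :=
  stmt3_general b p hp
end

section
/- Let b ≥ 1 and v ∈ {0,1}*. Then the palindromic length of ψ_b(v) is at most the palindromic length of v plus 1, i.e., |ψ_b(v)|_pal ≤ |v|_pal + 1. -/
/-! Every image `ψ_b(a) = 1·0^c` is the letter `1` followed by a palindrome. For such a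
morphism `f`, reversing `f(w)` and moving the leading `1` to the end gives `f` of the reversed
word, so `f` maps a nonempty palindrome to `1·t` with `t` a palindrome. A factorization
`v = p₁ ⋯ p_k` into nonempty palindromes thus yields `f(v) = 1 t₁ 1 t₂ ⋯ 1 t_k`, which regroups
into the `k + 1` palindromes `(1 t₁ 1) t₂ (1 t₃ 1) t₄ ⋯`, with a lone `1` or `1 t_k` at the end. -/

section Palindromes

variable {α : Type*}

theorem palLen_le_length {w : List α} (l : List (List α)) (hl : ∀ p ∈ l, IsPal p)
    (hw : l.flatten = w) : palLen w ≤ l.length :=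
  Nat.sInf_le ⟨l, rfl, hl, hw⟩

theorem exists_pal_factorization (w : List α) :
    ∃ l : List (List α), l.length = palLen w ∧ (∀ p ∈ l, IsPal p) ∧ l.flatten = w := by
  apply Nat.sInf_mem (s := {k | ∃ l : List (List α), l.length = k ∧ (∀ p ∈ l, IsPal p) ∧
    l.flatten = w})
  refine ⟨w.length, w.map ([·]), List.length_map _, ?_, ?_⟩
  · simp only [List.mem_map]
    rintro _ ⟨a, -, rfl⟩
    rfl
  · induction w with
    | nil => rfl
    | cons a w ih => simp [ih]

theorem exists_nonempty_pal_factorization (w : List α) :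
    ∃ l : List (List α), l.length ≤ palLen w ∧ (∀ p ∈ l, IsPal p ∧ p ≠ []) ∧
      l.flatten = w := by
  classical
  obtain ⟨l, hlen, hpal, rfl⟩ := exists_pal_factorization w
  refine ⟨l.filter (· ≠ []), hlen ▸ List.length_filter_le _ _, ?_, List.flatten_filter_ne_nil⟩
  intro p hp
  rw [List.mem_filter, decide_eq_true_iff] at hp
  exact ⟨hpal p hp.1, hp.2⟩

end Palindromes

section MarkedMorphism

variable {α β : Type*} {f : α → List β} {c : β}

theorem flatMap_reverse_append (hf : ∀ x, ∃ s, IsPal s ∧ f x = c :: s) (w : List α) :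
    w.reverse.flatMap f ++ [c] = c :: (w.flatMap f).reverse := by
  induction w with
  | nil => rfl
  | cons x w ih =>
    obtain ⟨s, hs, hx⟩ := hf x
    calc (x :: w).reverse.flatMap f ++ [c]
        = (w.reverse.flatMap f ++ [c]) ++ s ++ [c] := by simp [hx]
      _ = c :: (w.flatMap f).reverse ++ s.reverse ++ [c] := by rw [ih, hs]
      _ = c :: ((x :: w).flatMap f).reverse := by simp [hx]

theorem exists_flatMap_eq_cons_isPal (hf : ∀ x, ∃ s, IsPal s ∧ f x = c :: s) {p : List α}
    (hp : IsPal p) (hne : p ≠ []) : ∃ t, IsPal t ∧ p.flatMap f = c :: t := by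
  obtain ⟨x, p', rfl⟩ := List.exists_cons_of_ne_nil hne
  obtain ⟨s, -, hx⟩ := hf x
  set t := s ++ p'.flatMap f
  have hft : (x :: p').flatMap f = c :: t := by simp [t, hx]
  have h := flatMap_reverse_append hf (x :: p')
  rw [hp, hft, List.reverse_cons] at h
  exact ⟨t, List.append_cancel_right (List.cons_injective h).symm, hft⟩

theorem exists_pal_factorization_flatMap (hf : ∀ x, ∃ s, IsPal s ∧ f x = c :: s) :
    ∀ l : List (List α), (∀ p ∈ l, IsPal p ∧ p ≠ []) →
      ∃ l' : List (List β), l'.length ≤ l.length + 1 ∧ (∀ q ∈ l', IsPal q) ∧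
        l'.flatten = l.flatten.flatMap f
  | [], _ => ⟨[], by simp, by simp, rfl⟩
  | [p], hl => by
    obtain ⟨hp, hpne⟩ := hl p (by simp)
    obtain ⟨t, ht, hpt⟩ := exists_flatMap_eq_cons_isPal hf hp hpne
    refine ⟨[[c], t], le_rfl, ?_, by simp [hpt]⟩
    simp only [List.mem_cons, List.not_mem_nil, or_false]
    rintro q (rfl | rfl)
    exacts [rfl, ht]
  | p :: q :: l, hl => by
    obtain ⟨hp, hpne⟩ := hl p (by simp)
    obtain ⟨hq, hqne⟩ := hl q (by simp)
    obtain ⟨t, ht, hpt⟩ := exists_flatMap_eq_cons_isPal hf hp hpne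
    obtain ⟨u, hu, hqu⟩ := exists_flatMap_eq_cons_isPal hf hq hqne
    obtain ⟨l', hlen, hpal, hflat⟩ :=
      exists_pal_factorization_flatMap hf l (fun r hr => hl r (by simp [hr]))
    refine ⟨(c :: t ++ [c]) :: u :: l', by simpa using hlen, ?_, ?_⟩
    · simp only [List.mem_cons]
      rintro r (rfl | rfl | hr)
      · simpa [IsPal] using ht
      · exact hu
      · exact hpal r hr
    · simp [hflat, hpt, hqu]

end MarkedMorphism

theorem stmt4_general (b : ℕ) (v : List Bool) :
    palLen (psiW b v) ≤ palLen v + 1 := by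
  have hψ : ∀ a, ∃ s, IsPal s ∧ psiL b a = true :: s := fun a => by
    cases a <;> exact ⟨_, List.reverse_replicate .., rfl⟩
  obtain ⟨l, hlen, hpal, rfl⟩ := exists_nonempty_pal_factorization v
  obtain ⟨l', hlen', hpal', hflat'⟩ := exists_pal_factorization_flatMap hψ l hpal
  calc palLen (psiW b l.flatten) ≤ l'.length := palLen_le_length l' hpal' hflat'
    _ ≤ palLen l.flatten + 1 := by omega

theorem stmt4 (b : ℕ) (hb : 1 ≤ b) (v : List Bool) :
    palLen (psiW b v) ≤ palLen v + 1 :=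
  stmt4_general b v
end

section
/- Let u be a Sturmian word with irrational slope α ∈ (0,1) having continued fraction expansion α = [0; a_1, a_2, a_3, …], and let b ≥ 1. Then ψ_b(u) is a Sturmian word whose slope β satisfies β = 1/(b + α), i.e., β = [0; b, a_1, a_2, a_3, …]. -/
namespace SturmAux

/-! ### Basic factor machinery -/

def fac (x : ℕ → Bool) (i n : ℕ) : List Bool := (List.range n).map (fun k => x (i + k))

@[simp] lemma fac_length (x : ℕ → Bool) (i n : ℕ) : (fac x i n).length = n := by
  simp [fac]

@[simp] lemma fac_zero (x : ℕ → Bool) (i : ℕ) : fac x i 0 = [] := by simp [fac]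

@[simp] lemma fac_getElem (x : ℕ → Bool) (i n t : ℕ) (ht : t < n) :
    (fac x i n)[t]'(by simpa using ht) = x (i + t) := by
  simp [fac]

lemma fac_succ (x : ℕ → Bool) (i n : ℕ) : fac x i (n + 1) = fac x i n ++ [x (i + n)] := by
  simp [fac, List.range_succ]

lemma fac_cons (x : ℕ → Bool) (i n : ℕ) : fac x i (n + 1) = x i :: fac x (i + 1) n := by
  apply List.ext_getElem (by simp)
  intro t h1 h2
  rcases t with _ | t
  · simp [fac]
  · have ht : t < n := by simp at h2; omega
    simp only [List.getElem_cons_succ]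
    rw [fac_getElem x i (n + 1) (t + 1) (by omega), fac_getElem x (i + 1) n t ht]
    ring_nf

lemma fac_eq_iff {x : ℕ → Bool} {i i' n : ℕ} :
    fac x i n = fac x i' n ↔ ∀ t < n, x (i + t) = x (i' + t) := by
  constructor
  · intro h t ht
    calc x (i + t) = (fac x i n)[t]'(by simpa using ht) := (fac_getElem x i n t ht).symm
      _ = (fac x i' n)[t]'(by simpa using ht) := List.getElem_of_eq h _
      _ = x (i' + t) := fac_getElem x i' n t ht
  · intro h
    apply List.ext_getElem (by simp)
    intro t h1 h2
    simp only [fac_length] at h1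
    rw [fac_getElem x i n t h1, fac_getElem x i' n t h1]
    exact h t h1

def Facs (x : ℕ → Bool) (n : ℕ) : Set (List Bool) := {v | v.length = n ∧ FactorOf v x}

lemma mem_Facs {x : ℕ → Bool} {v : List Bool} {n : ℕ} :
    v ∈ Facs x n ↔ ∃ i, v = fac x i n := by
  constructor
  · rintro ⟨hl, i, hv⟩
    exact ⟨i, by rw [hv, hl]; rfl⟩
  · rintro ⟨i, rfl⟩
    exact ⟨fac_length x i n, ⟨i, by rw [fac_length]; rfl⟩⟩

lemma fac_mem_Facs (x : ℕ → Bool) (i n : ℕ) : fac x i n ∈ Facs x n :=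
  mem_Facs.2 ⟨i, rfl⟩

lemma Facs_finite (x : ℕ → Bool) (n : ℕ) : (Facs x n).Finite :=
  (List.finite_length_eq Bool n).subset (fun _ hv => hv.1)

lemma Sturmian_iff_ncard {x : ℕ → Bool} : Sturmian x ↔ ∀ n, (Facs x n).ncard = n + 1 :=
  Iff.rfl

@[simp] lemma Facs_zero (x : ℕ → Bool) : Facs x 0 = {([] : List Bool)} := by
  ext v
  simp only [Set.mem_singleton_iff, mem_Facs]
  constructor
  · rintro ⟨i, rfl⟩; simp
  · rintro rfl; exact ⟨0, by simp⟩

/-- Right-special factors of length `n`. -/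
def RSset (x : ℕ → Bool) (n : ℕ) : Set (List Bool) :=
  {v | v ++ [true] ∈ Facs x (n + 1) ∧ v ++ [false] ∈ Facs x (n + 1)}

lemma RSset_finite (x : ℕ → Bool) (n : ℕ) : (RSset x n).Finite := by
  apply (List.finite_length_eq Bool n).subset
  intro v hv
  have h := hv.1.1
  simp only [List.length_append, List.length_singleton] at h
  simp only [Set.mem_setOf_eq]
  omega

/-- append is factor implies the word itself is a factor -/
lemma factor_of_append_factor {x : ℕ → Bool} {v : List Bool} {a : Bool} {n : ℕ}
    (h : v ++ [a] ∈ Facs x (n + 1)) : v ∈ Facs x n := by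
  obtain ⟨i, hi⟩ := mem_Facs.1 h
  rw [fac_succ] at hi
  have hlen : v.length = n := by
    have := congrArg List.length hi; simpa using this
  have := List.append_inj hi (by simp [hlen])
  exact mem_Facs.2 ⟨i, this.1⟩

/-- The fundamental counting identity. -/
lemma ncard_Facs_succ (x : ℕ → Bool) (n : ℕ) :
    (Facs x (n + 1)).ncard = (Facs x n).ncard + (RSset x n).ncard := by
  classical
  set T : Set (List Bool) := {v | v ++ [true] ∈ Facs x (n + 1)} with hT
  set F : Set (List Bool) := {v | v ++ [false] ∈ Facs x (n + 1)} with hF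
  have hTfin : T.Finite := by
    apply (List.finite_length_eq Bool n).subset
    intro v hv
    have h := hv.1
    simp only [List.length_append, List.length_singleton] at h
    simp only [Set.mem_setOf_eq]
    omega
  have hFfin : F.Finite := by
    apply (List.finite_length_eq Bool n).subset
    intro v hv
    have h := hv.1
    simp only [List.length_append, List.length_singleton] at h
    simp only [Set.mem_setOf_eq]
    omega
  have hunion : T ∪ F = Facs x n := by
    ext v
    constructor
    · rintro (hv | hv)
      · exact factor_of_append_factor hv
      · exact factor_of_append_factor hv
    · intro hv
      obtain ⟨i, rfl⟩ := mem_Facs.1 hv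
      have : fac x i n ++ [x (i + n)] ∈ Facs x (n + 1) := by
        rw [← fac_succ]; exact fac_mem_Facs x i (n + 1)
      cases hxa : x (i + n)
      · right; rw [hxa] at this; exact this
      · left; rw [hxa] at this; exact this
  have hinter : T ∩ F = RSset x n := rfl
  have hdecomp : Facs x (n + 1) =
      ((· ++ [true]) '' T) ∪ ((· ++ [false]) '' F) := by
    ext z
    constructor
    · intro hz
      obtain ⟨i, rfl⟩ := mem_Facs.1 hz
      rw [fac_succ]
      cases hxa : x (i + n)
      · right
        refine ⟨fac x i n, ?_, rfl⟩
        show fac x i n ++ [false] ∈ Facs x (n+1)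
        rw [← hxa, ← fac_succ]; exact fac_mem_Facs _ _ _
      · left
        refine ⟨fac x i n, ?_, rfl⟩
        show fac x i n ++ [true] ∈ Facs x (n+1)
        rw [← hxa, ← fac_succ]; exact fac_mem_Facs _ _ _
    · rintro (⟨v, hv, rfl⟩ | ⟨v, hv, rfl⟩)
      · exact hv
      · exact hv
  have hinjT : Set.InjOn (· ++ [true]) T := fun a _ b _ h => by simpa using h
  have hinjF : Set.InjOn (· ++ [false]) F := fun a _ b _ h => by simpa using h
  have hdisj : Disjoint ((· ++ [true]) '' T) ((· ++ [false]) '' F) := by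
    rw [Set.disjoint_iff_inter_eq_empty]
    ext z
    simp only [Set.mem_inter_iff, Set.mem_image, Set.mem_empty_iff_false, iff_false]
    rintro ⟨⟨v, _, rfl⟩, ⟨v', _, h⟩⟩
    have := congrArg (fun l => l.getLast?) h
    simp at this
  rw [hdecomp, Set.ncard_union_eq hdisj (hTfin.image _) (hFfin.image _),
    Set.ncard_image_of_injOn hinjT, Set.ncard_image_of_injOn hinjF, ← hinter, ← hunion,
    Set.ncard_union_add_ncard_inter T F hTfin hFfin]

/-- Sturmian iff unique right-special factor at each length. -/
lemma sturmian_iff_RS {x : ℕ → Bool} :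
    Sturmian x ↔ ∀ n, (RSset x n).ncard = 1 := by
  rw [Sturmian_iff_ncard]
  constructor
  · intro hx n
    have h1 := hx n
    have h2 := hx (n + 1)
    have h3 := ncard_Facs_succ x n
    omega
  · intro hrs n
    induction n with
    | zero => rw [Facs_zero]; exact Set.ncard_singleton _
    | succ m ih => rw [ncard_Facs_succ, ih, hrs]

end SturmAux

namespace SturmAux

/-! ### Recurrence of Sturmian-complexity words -/

lemma fac_shift (x : ℕ → Bool) (N i n : ℕ) :
    fac (fun k => x (N + k)) i n = fac x (N + i) n := by
  simp [fac, Nat.add_assoc]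

lemma Facs_shift_subset (x : ℕ → Bool) (N n : ℕ) :
    Facs (fun k => x (N + k)) n ⊆ Facs x n := by
  intro v hv
  obtain ⟨i, rfl⟩ := mem_Facs.1 hv
  rw [fac_shift]
  exact fac_mem_Facs _ _ _

/-- If there is no right-special factor of length `m`, the next letter is determined. -/
lemma deterministic_of_no_RS {x : ℕ → Bool} {m : ℕ} (h : RSset x m = ∅)
    {i j : ℕ} (hij : fac x i m = fac x j m) : x (i + m) = x (j + m) := by
  by_contra hne
  have h1 : fac x i m ++ [x (i + m)] ∈ Facs x (m + 1) := by
    rw [← fac_succ]; exact fac_mem_Facs _ _ _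
  have h2 : fac x i m ++ [x (j + m)] ∈ Facs x (m + 1) := by
    rw [hij, ← fac_succ]; exact fac_mem_Facs _ _ _
  have : fac x i m ∈ RSset x m := by
    rcases hxi : x (i + m) <;> rcases hxj : x (j + m)
    · exact absurd (hxi.trans hxj.symm) hne
    · rw [hxi] at h1; rw [hxj] at h2; exact ⟨h2, h1⟩
    · rw [hxi] at h1; rw [hxj] at h2; exact ⟨h1, h2⟩
    · exact absurd (hxi.trans hxj.symm) hne
  rw [h] at this
  exact this

lemma window_propagate {x : ℕ → Bool} {m : ℕ} (h : RSset x m = ∅)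
    {i j : ℕ} (hij : fac x i m = fac x j m) :
    ∀ k, fac x (i + k) m = fac x (j + k) m := by
  intro k
  induction k with
  | zero => simpa using hij
  | succ k ih =>
    have hdet := deterministic_of_no_RS h ih
    rw [fac_eq_iff] at ih ⊢
    intro t ht
    rcases Nat.lt_or_ge (t + 1) m with h1 | h1
    · have := ih (t + 1) h1
      have e1 : i + k + (t + 1) = i + (k + 1) + t := by omega
      have e2 : j + k + (t + 1) = j + (k + 1) + t := by omega
      rwa [e1, e2] at this
    · have hte : t + 1 = m := by omega
      have e1 : i + k + m = i + (k + 1) + t := by omega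
      have e2 : j + k + m = j + (k + 1) + t := by omega
      rwa [e1, e2] at hdet

/-- Eventually periodic words have bounded complexity. -/
lemma ncard_le_of_eventually_periodic {x : ℕ → Bool} {N0 P : ℕ} (hP : 1 ≤ P)
    (hper : ∀ k, x (N0 + k + P) = x (N0 + k)) (M : ℕ) :
    (Facs x M).ncard ≤ N0 + P := by
  have hsub : Facs x M ⊆ (fun q => fac x q M) '' (Set.Iio (N0 + P)) := by
    intro v hv
    obtain ⟨q, rfl⟩ := mem_Facs.1 hv
    clear hv
    induction q using Nat.strong_induction_on with
    | _ q ih =>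
      rcases Nat.lt_or_ge q (N0 + P) with hq | hq
      · exact ⟨q, hq, rfl⟩
      · have heq : fac x (q - P) M = fac x q M := by
          rw [fac_eq_iff]
          intro t ht
          have e1 : q - P + t = N0 + (q - P + t - N0) := by omega
          have e2 : q + t = N0 + (q - P + t - N0) + P := by omega
          rw [e1, e2, hper]
        rw [← heq]
        exact ih (q - P) (by omega)
  calc (Facs x M).ncard ≤ ((fun q => fac x q M) '' (Set.Iio (N0 + P))).ncard :=
        Set.ncard_le_ncard hsub ((Set.finite_Iio _).image _)
    _ ≤ (Set.Iio (N0 + P)).ncard := Set.ncard_image_le (Set.finite_Iio _)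
    _ = N0 + P := by rw [← Finset.coe_range, Set.ncard_coe_finset, Finset.card_range]

/-- Every factor of a Sturmian word occurs at arbitrarily late positions. -/
lemma sturmian_recurrent {x : ℕ → Bool} (hx : Sturmian x) (n N i : ℕ) :
    ∃ m, N ≤ m ∧ fac x m n = fac x i n := by
  by_contra hcon
  push_neg at hcon
  set y : ℕ → Bool := fun k => x (N + k) with hy
  have hx' := Sturmian_iff_ncard.1 hx
  have hvnot : fac x i n ∉ Facs y n := by
    intro hmem
    obtain ⟨i', hi'⟩ := mem_Facs.1 hmem
    rw [fac_shift] at hi'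
    exact hcon (N + i') (Nat.le_add_right _ _) hi'.symm
  have hcard : (Facs y n).ncard ≤ n := by
    have hsub : Facs y n ⊆ Facs x n \ {fac x i n} := by
      intro v hv
      exact ⟨Facs_shift_subset x N n hv, by rintro rfl; exact hvnot hv⟩
    calc (Facs y n).ncard ≤ (Facs x n \ {fac x i n}).ncard :=
          Set.ncard_le_ncard hsub ((Facs_finite x n).diff)
      _ = (Facs x n).ncard - 1 :=
          Set.ncard_diff_singleton_of_mem (fac_mem_Facs x i n)
      _ = n := by rw [hx' n]; omega
  have hex : ∃ m < n, (RSset y m).ncard = 0 := by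
    by_contra hall
    push_neg at hall
    have hgrow : ∀ m ≤ n, m + 1 ≤ (Facs y m).ncard := by
      intro m hm
      induction m with
      | zero => rw [Facs_zero]; simp
      | succ p ih =>
        have h1 := ih (by omega)
        have h2 := hall p (by omega)
        rw [ncard_Facs_succ]
        omega
    have := hgrow n le_rfl
    omega
  obtain ⟨m, hmn, hm0⟩ := hex
  have hmempty : RSset y m = ∅ :=
    (Set.ncard_eq_zero (RSset_finite y m)).1 hm0
  -- pigeonhole: two equal windows
  obtain ⟨a, -, c, -, hac, heq⟩ :
      ∃ a ∈ Finset.range ((Facs_finite y m).toFinset.card + 1), ∃ c ∈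
        Finset.range ((Facs_finite y m).toFinset.card + 1), a ≠ c ∧ fac y a m = fac y c m := by
    obtain ⟨a, ha, c, hc, hac, h⟩ := Finset.exists_ne_map_eq_of_card_lt_of_maps_to
      (s := Finset.range ((Facs_finite y m).toFinset.card + 1))
      (t := (Facs_finite y m).toFinset)
      (by simp) (fun q _ => (Facs_finite y m).mem_toFinset.2 (fac_mem_Facs y q m))
    exact ⟨a, ha, c, hc, hac, h⟩
  -- wlog a < c
  obtain ⟨a, c, hlt, heq⟩ : ∃ a c, a < c ∧ fac y a m = fac y c m := by
    rcases Nat.lt_or_ge a c with h | h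
    · exact ⟨a, c, h, heq⟩
    · exact ⟨c, a, by omega, heq.symm⟩
  set P := c - a with hP
  have hP1 : 1 ≤ P := by omega
  have hper : ∀ k, x (N + a + m + k + P) = x (N + a + m + k) := by
    intro k
    have hw := window_propagate hmempty heq k
    have hdet := deterministic_of_no_RS hmempty hw
    simp only [hy] at hdet
    have e1 : N + a + m + k = N + (a + k + m) := by omega
    have e2 : N + a + m + k + P = N + (c + k + m) := by omega
    rw [e2, e1]
    exact hdet.symm
  have hbound := ncard_le_of_eventually_periodic (N0 := N + a + m) hP1 hper (N + a + m + P)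
  rw [hx' (N + a + m + P)] at hbound
  omega

end SturmAux

namespace SturmAux

/-! ### Block structure of `psiInf b u` -/

section W

variable (b : ℕ) (u : ℕ → Bool)

/-- length of the block of letter `m` -/
def Lb (m : ℕ) : ℕ := (psiL b (u m)).length

/-- starting position of block `m` -/
def sb : ℕ → ℕ
  | 0 => 0
  | m + 1 => sb m + Lb b u m

variable {b u}

lemma psiL_length (hb : 1 ≤ b) (a : Bool) :
    (psiL b a).length = b + (if a then 1 else 0) := by
  cases a <;> simp [psiL] <;> omega

lemma Lb_eq (hb : 1 ≤ b) (m : ℕ) : Lb b u m = b + (if u m then 1 else 0) :=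
  psiL_length hb (u m)

lemma Lb_ge (hb : 1 ≤ b) (m : ℕ) : b ≤ Lb b u m := by
  rw [Lb_eq hb]; omega

lemma Lb_le (hb : 1 ≤ b) (m : ℕ) : Lb b u m ≤ b + 1 := by
  rw [Lb_eq hb]; split <;> omega

lemma psiL_getD_zero (a : Bool) : (psiL b a).getD 0 false = true := by
  cases a <;> rfl

lemma getD_cons_succ' (a d : Bool) (l : List Bool) (r : ℕ) :
    (a :: l).getD (r + 1) d = l.getD r d := rfl

lemma getD_replicate_false (k r : ℕ) : (List.replicate k false).getD r false = false := by
  rcases Nat.lt_or_ge r k with h | h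
  · rw [List.getD_eq_getElem _ _ (by simpa using h)]
    exact List.getElem_replicate _
  · exact List.getD_eq_default _ _ (by simpa using h)

lemma psiL_getD_pos {r : ℕ} (hr : 1 ≤ r) (a : Bool) : (psiL b a).getD r false = false := by
  obtain ⟨r', rfl⟩ := Nat.exists_eq_add_of_le hr
  rw [Nat.add_comm 1 r']
  cases a
  · show (true :: List.replicate (b - 1) false).getD (r' + 1) false = false
    rw [getD_cons_succ', getD_replicate_false]
  · show (true :: List.replicate b false).getD (r' + 1) false = false
    rw [getD_cons_succ', getD_replicate_false]

@[simp] lemma sb_zero : sb b u 0 = 0 := rfl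

lemma sb_succ (m : ℕ) : sb b u (m + 1) = sb b u m + Lb b u m := rfl

lemma sb_le_succ (hb : 1 ≤ b) (m : ℕ) : sb b u m + b ≤ sb b u (m + 1) := by
  rw [sb_succ]; have := Lb_ge (u := u) hb m; omega

lemma sb_succ_le (hb : 1 ≤ b) (m : ℕ) : sb b u (m + 1) ≤ sb b u m + b + 1 := by
  rw [sb_succ]; have := Lb_le (u := u) hb m; omega

lemma sb_strict_mono (hb : 1 ≤ b) : StrictMono (sb b u) := by
  apply strictMono_nat_of_lt_succ
  intro m
  have := sb_le_succ (u := u) hb m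
  omega

lemma le_sb (hb : 1 ≤ b) (m : ℕ) : m ≤ sb b u m := by
  induction m with
  | zero => simp
  | succ p ih => have := sb_le_succ (u := u) hb p; omega

lemma sb_le_mul (hb : 1 ≤ b) (m : ℕ) : sb b u m ≤ m * (b + 1) := by
  induction m with
  | zero => simp
  | succ p ih =>
    have := sb_succ_le (u := u) hb p
    have : sb b u (p + 1) ≤ p * (b + 1) + b + 1 := by omega
    calc sb b u (p+1) ≤ p * (b+1) + b + 1 := this
      _ = (p+1) * (b+1) := by ring

lemma psiW_nil : psiW b [] = [] := rfl

lemma psiW_append (v v' : List Bool) : psiW b (v ++ v') = psiW b v ++ psiW b v' := by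
  simp [psiW]

lemma psiW_cons (a : Bool) (v : List Bool) : psiW b (a :: v) = psiL b a ++ psiW b v := by
  simp [psiW]

lemma fac_append (x : ℕ → Bool) (i n n' : ℕ) :
    fac x i (n + n') = fac x i n ++ fac x (i + n) n' := by
  apply List.ext_getElem (by simp)
  intro t h1 h2
  simp only [fac_length] at h1
  rw [fac_getElem x i (n + n') t h1]
  rcases Nat.lt_or_ge t n with h | h
  · rw [List.getElem_append_left (by simpa using h), fac_getElem x i n t h]
  · rw [List.getElem_append_right (by simpa using h)]
    have ht' : t - n < n' := by omega
    have := fac_getElem x (i + n) n' (t - n) ht'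
    simp only [fac_length] at this ⊢
    rw [this]
    congr 1
    omega

lemma sb_add (m t : ℕ) : sb b u (m + t) = sb b u m + (psiW b (fac u m t)).length := by
  induction t with
  | zero => simp [psiW_nil]
  | succ p ih =>
    have : fac u m (p + 1) = fac u m p ++ [u (m + p)] := fac_succ u m p
    rw [show m + (p + 1) = (m + p) + 1 by omega, sb_succ, ih, this, psiW_append]
    simp only [List.length_append]
    have : psiW b [u (m + p)] = psiL b (u (m + p)) := by simp [psiW]
    rw [this]
    have h2 : (psiL b (u (m + p))).length = Lb b u (m + p) := rfl
    omega

lemma psiW_fac0_length (M : ℕ) : (psiW b (fac u 0 M)).length = sb b u M := by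
  have := sb_add (b := b) (u := u) 0 M
  simpa using this.symm

lemma range_map_eq_fac (x : ℕ → Bool) (n : ℕ) : (List.range n).map x = fac x 0 n := by
  simp [fac]

/-- `psiInf` is computed by any sufficiently long prefix. -/
lemma psiInf_eq_getD (hb : 1 ≤ b) {k M : ℕ} (hk : k < sb b u M) :
    psiInf b u k = (psiW b (fac u 0 M)).getD k false := by
  have hdef : psiInf b u k = (psiW b (fac u 0 (k + 1))).getD k false := by
    simp only [psiInf, psiW, range_map_eq_fac]
  have key : ∀ M₁ M₂ : ℕ, M₁ ≤ M₂ → k < sb b u M₁ →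
      (psiW b (fac u 0 M₁)).getD k false = (psiW b (fac u 0 M₂)).getD k false := by
    intro M₁ M₂ hle hk1
    have hsplit : fac u 0 M₂ = fac u 0 M₁ ++ fac u M₁ (M₂ - M₁) := by
      have := fac_append u 0 M₁ (M₂ - M₁)
      rw [show M₁ + (M₂ - M₁) = M₂ by omega] at this
      simpa using this
    rw [hsplit, psiW_append, List.getD_append]
    rw [psiW_fac0_length]
    exact hk1
  have h1 : k < sb b u (k + 1) := by
    have := le_sb (u := u) hb (k + 1); omega
  rcases Nat.le_total (k + 1) M with h | h
  · rw [hdef, key (k + 1) M h h1]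
  · rw [hdef, (key M (k + 1) h hk).symm]

/-- Block evaluation: the letter at `sb m + r`. -/
lemma w_block (hb : 1 ≤ b) (m r : ℕ) (hr : r < Lb b u m) :
    psiInf b u (sb b u m + r) = (psiL b (u m)).getD r false := by
  have hlt : sb b u m + r < sb b u (m + 1) := by rw [sb_succ]; omega
  rw [psiInf_eq_getD hb hlt]
  have hsplit : fac u 0 (m + 1) = fac u 0 m ++ fac u m 1 := by
    have := fac_append u 0 m 1; simpa using this
  have hfac1 : fac u m 1 = [u m] := by simp [fac, List.range_succ]
  rw [hsplit, psiW_append, List.getD_append_right _ _ _ _ (by rw [psiW_fac0_length]; omega)]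
  rw [psiW_fac0_length, hfac1]
  have : psiW b [u m] = psiL b (u m) := by simp [psiW]
  rw [this]
  congr 1
  omega

lemma w_at_sb (hb : 1 ≤ b) (m : ℕ) : psiInf b u (sb b u m) = true := by
  have h0 : (0 : ℕ) < Lb b u m := by have := Lb_ge (u := u) hb m; omega
  have h := w_block hb m 0 h0
  rw [psiL_getD_zero] at h
  simpa using h

lemma w_mid_false (hb : 1 ≤ b) (m r : ℕ) (h1 : 1 ≤ r) (h2 : r < Lb b u m) :
    psiInf b u (sb b u m + r) = false := by
  rw [w_block hb m r h2, psiL_getD_pos h1]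

lemma exists_block (hb : 1 ≤ b) (k : ℕ) : ∃ m r, k = sb b u m + r ∧ r < Lb b u m := by
  induction k with
  | zero => exact ⟨0, 0, by simp, by have := Lb_ge (u := u) hb 0; omega⟩
  | succ p ih =>
    obtain ⟨m, r, hp, hr⟩ := ih
    rcases Nat.lt_or_ge (r + 1) (Lb b u m) with h | h
    · exact ⟨m, r + 1, by omega, h⟩
    · refine ⟨m + 1, 0, ?_, by have := Lb_ge (u := u) hb (m + 1); omega⟩
      rw [sb_succ]
      omega

lemma w_true_iff (hb : 1 ≤ b) (k : ℕ) :
    psiInf b u k = true ↔ ∃ m, k = sb b u m := by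
  constructor
  · intro h
    obtain ⟨m, r, rfl, hr⟩ := exists_block (u := u) hb k
    rcases Nat.eq_zero_or_pos r with rfl | hpos
    · exact ⟨m, by simp⟩
    · rw [w_mid_false hb m r hpos hr] at h
      exact absurd h (by simp)
  · rintro ⟨m, rfl⟩
    exact w_at_sb hb m

lemma w_false_iff (hb : 1 ≤ b) (k : ℕ) :
    psiInf b u k = false ↔ ∀ m, k ≠ sb b u m := by
  rw [← Bool.not_eq_true, w_true_iff hb]
  push_neg
  rfl

/-- Segment evaluation lemma. -/
lemma w_segment (hb : 1 ≤ b) (m t p : ℕ) (hp : p < (psiW b (fac u m t)).length) :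
    psiInf b u (sb b u m + p) = (psiW b (fac u m t)).getD p false := by
  induction t generalizing p with
  | zero => simp [psiW_nil] at hp
  | succ q ih =>
    have hsplit : psiW b (fac u m (q + 1)) = psiW b (fac u m q) ++ psiL b (u (m + q)) := by
      rw [fac_succ, psiW_append]
      congr 1
      simp [psiW]
    rcases Nat.lt_or_ge p (psiW b (fac u m q)).length with h | h
    · rw [hsplit, List.getD_append _ _ _ _ h]
      exact ih p h
    · rw [hsplit, List.getD_append_right _ _ _ _ h]
      have hr : p - (psiW b (fac u m q)).length < Lb b u (m + q) := by
        rw [hsplit] at hp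
        simp only [List.length_append] at hp
        have : (psiL b (u (m + q))).length = Lb b u (m + q) := rfl
        omega
      have hpos : sb b u m + p = sb b u (m + q) + (p - (psiW b (fac u m q)).length) := by
        rw [sb_add (m := m) (t := q)]
        omega
      rw [hpos, w_block hb (m + q) _ hr]

/-- No gap of length more than `b` without a block start. -/
lemma exists_sb_near (hb : 1 ≤ b) (k : ℕ) : ∃ m, k ≤ sb b u m ∧ sb b u m ≤ k + b := by
  obtain ⟨m, r, rfl, hr⟩ := exists_block (u := u) hb k
  rcases Nat.eq_zero_or_pos r with rfl | hpos
  · exact ⟨m, by simp, by omega⟩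
  · refine ⟨m + 1, ?_, ?_⟩ <;> rw [sb_succ]
    · omega
    · have := Lb_le (u := u) hb m
      omega

end W

end SturmAux

namespace SturmAux

/-! ### Slope of the image word -/

section Slope

variable {b : ℕ} {u : ℕ → Bool}

/-- number of `true`s among the first `n` letters -/
def ones (x : ℕ → Bool) (n : ℕ) : ℕ := ((List.range n).map x).count true

lemma ones_succ (x : ℕ → Bool) (n : ℕ) :
    ones x (n + 1) = ones x n + (if x n then 1 else 0) := by
  cases h : x n <;>
    simp [ones, List.range_succ, h]

lemma sb_eq_ones (hb : 1 ≤ b) (m : ℕ) : sb b u m = m * b + ones u m := by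
  induction m with
  | zero => simp [ones]
  | succ p ih =>
    rw [sb_succ, ih, Lb_eq hb, ones_succ]
    cases h : u p <;> simp [h] <;> ring

/-- index of the first block start at position `≥ n` -/
noncomputable def Mfun (b : ℕ) (u : ℕ → Bool) (n : ℕ) : ℕ := sInf {m | n ≤ sb b u m}

lemma Mfun_nonempty (hb : 1 ≤ b) (n : ℕ) : {m | n ≤ sb b u m}.Nonempty :=
  ⟨n, le_sb hb n⟩

lemma Mfun_spec (hb : 1 ≤ b) (n : ℕ) : n ≤ sb b u (Mfun b u n) :=
  Nat.sInf_mem (Mfun_nonempty hb n)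

lemma Mfun_le {n m : ℕ} (h : n ≤ sb b u m) : Mfun b u n ≤ m :=
  Nat.sInf_le h

lemma Mfun_min (hb : 1 ≤ b) {n m : ℕ} (h : m < Mfun b u n) : sb b u m < n := by
  by_contra hcon
  push_neg at hcon
  exact absurd (Mfun_le hcon) (by omega)

lemma ones_w_eq_Mfun (hb : 1 ≤ b) (n : ℕ) : ones (psiInf b u) n = Mfun b u n := by
  induction n with
  | zero =>
    have : Mfun b u 0 = 0 := Nat.eq_zero_of_le_zero (Mfun_le (by simp))
    simp [ones, this]
  | succ p ih =>
    rw [ones_succ, ih]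
    cases h : psiInf b u p
    · have hne : ∀ m, p ≠ sb b u m := (w_false_iff hb p).1 h
      have h1 : Mfun b u (p + 1) ≤ Mfun b u p := by
        apply Mfun_le
        have := Mfun_spec (u := u) hb p
        have := hne (Mfun b u p)
        omega
      have h2 : Mfun b u p ≤ Mfun b u (p + 1) := by
        apply Mfun_le
        have := Mfun_spec (u := u) hb (p + 1)
        omega
      simp
      omega
    · obtain ⟨m, hm⟩ := (w_true_iff hb p).1 h
      have hMp : Mfun b u p = m := by
        apply le_antisymm (Mfun_le (le_of_eq hm))
        by_contra hcon
        push_neg at hcon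
        have hmono := sb_strict_mono (u := u) hb hcon
        have := Mfun_spec (u := u) hb p
        omega
      have hMp1 : Mfun b u (p + 1) = m + 1 := by
        apply le_antisymm
        · apply Mfun_le
          have := sb_le_succ (u := u) hb m
          omega
        · by_contra hcon
          push_neg at hcon
          have hlt : Mfun b u (p + 1) ≤ m := by omega
          have hmono := (sb_strict_mono (u := u) hb).monotone hlt
          have := Mfun_spec (u := u) hb (p + 1)
          omega
      simp [hMp, hMp1]

open Filter Topology

lemma slope_w (hb : 1 ≤ b) {α : ℝ} (hpos : 0 < α) (hslope : HasSlope u α) :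
    HasSlope (psiInf b u) (1 / (b + α)) := by
  have hslope' : Tendsto (fun n => (ones u n : ℝ) / n) atTop (nhds α) := hslope
  have hbα : (0 : ℝ) < b + α := by
    have : (0 : ℝ) ≤ b := Nat.cast_nonneg b
    linarith
  have hne : (b : ℝ) + α ≠ 0 := ne_of_gt hbα
  -- sb m / m → b + α
  have hsb_div : Tendsto (fun m => (sb b u m : ℝ) / m) atTop (nhds (b + α)) := by
    have h1 : Tendsto (fun m : ℕ => (b : ℝ) + (ones u m : ℝ) / m) atTop (nhds (b + α)) :=
      tendsto_const_nhds.add hslope'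
    apply h1.congr'
    filter_upwards [eventually_ge_atTop 1] with m hm
    have hm0 : (m : ℝ) ≠ 0 := by
      simp only [ne_eq, Nat.cast_eq_zero]
      omega
    rw [sb_eq_ones hb]
    push_cast
    field_simp
  -- Mfun → ∞
  have hM_atTop : Tendsto (Mfun b u) atTop atTop := by
    apply Filter.tendsto_atTop_atTop.2
    intro C
    refine ⟨C * (b + 1) + 1, fun n hn => ?_⟩
    by_contra hcon
    push_neg at hcon
    have hle : Mfun b u n ≤ C := by omega
    have h1 : n ≤ sb b u (Mfun b u n) := Mfun_spec hb n
    have h2 : sb b u (Mfun b u n) ≤ Mfun b u n * (b + 1) := sb_le_mul hb _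
    have h3 : Mfun b u n * (b + 1) ≤ C * (b + 1) := Nat.mul_le_mul_right _ hle
    omega
  -- n / Mfun n → b + α
  have hn_div : Tendsto (fun n : ℕ => (n : ℝ) / (Mfun b u n : ℝ)) atTop (nhds (b + α)) := by
    have hupper : Tendsto (fun n => (sb b u (Mfun b u n) : ℝ) / (Mfun b u n)) atTop
        (nhds (b + α)) := hsb_div.comp hM_atTop
    have hblim : Tendsto (fun n => (b : ℝ) / (Mfun b u n)) atTop (nhds 0) :=
      (tendsto_const_div_atTop_nhds_zero_nat (b : ℝ)).comp hM_atTop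
    have hlower : Tendsto
        (fun n => (sb b u (Mfun b u n) : ℝ) / (Mfun b u n) - (b : ℝ) / (Mfun b u n)) atTop
        (nhds (b + α)) := by
      have := hupper.sub hblim
      simpa using this
    have hMge : ∀ᶠ n : ℕ in atTop, 1 ≤ Mfun b u n := hM_atTop.eventually (eventually_ge_atTop 1)
    apply tendsto_of_tendsto_of_tendsto_of_le_of_le' hlower hupper
    · filter_upwards [hMge, eventually_ge_atTop 1] with n hM hn
      have hMpos : (0 : ℝ) < (Mfun b u n : ℝ) := by
        simp only [Nat.cast_pos]; omega
      have hkey : sb b u (Mfun b u n) ≤ n + b := by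
        have hlt : sb b u (Mfun b u n - 1) < n := Mfun_min hb (by omega)
        have := sb_succ_le (u := u) hb (Mfun b u n - 1)
        have he : Mfun b u n - 1 + 1 = Mfun b u n := by omega
        rw [he] at this
        omega
      rw [div_sub_div_same, div_le_div_iff_of_pos_right hMpos]
      have : (sb b u (Mfun b u n) : ℝ) ≤ (n : ℝ) + b := by exact_mod_cast hkey
      linarith
    · filter_upwards [hMge] with n hM
      have hMpos : (0 : ℝ) < (Mfun b u n : ℝ) := by
        simp only [Nat.cast_pos]; omega
      rw [div_le_div_iff_of_pos_right hMpos]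
      exact_mod_cast Mfun_spec (u := u) hb n
  -- conclude
  have hfinal : Tendsto (fun n => (Mfun b u n : ℝ) / n) atTop (nhds (1 / (b + α))) := by
    have hinv := hn_div.inv₀ hne
    rw [one_div]
    apply hinv.congr'
    filter_upwards [] with n
    rw [inv_div]
  have heq : (fun n => (((List.range n).map (psiInf b u)).count true : ℝ) / n) =
      fun n => (Mfun b u n : ℝ) / n := by
    funext n
    have : ((List.range n).map (psiInf b u)).count true = ones (psiInf b u) n := rfl
    rw [this, ones_w_eq_Mfun hb]
  show Tendsto _ atTop _
  rw [heq]
  exact hfinal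

end Slope

end SturmAux

namespace SturmAux

section WEval

variable {b : ℕ} {u : ℕ → Bool}

lemma w_inside_false (hb : 1 ≤ b) {m k : ℕ} (h1 : sb b u m < k) (h2 : k < sb b u (m + 1)) :
    psiInf b u k = false := by
  have hsb := sb_succ (b := b) (u := u) m
  have hk : k = sb b u m + (k - sb b u m) := by omega
  rw [hk]
  exact w_mid_false hb m _ (by omega) (by omega)

lemma w_eval_lead (hb : 1 ≤ b) {i j m : ℕ} (hi : i + j = sb b u m)
    (hjm : 1 ≤ j → 1 ≤ m ∧ j < Lb b u (m - 1)) :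
    ∀ τ, τ < j → psiInf b u (i + τ) = false := by
  intro τ hτ
  obtain ⟨hm1, hjL⟩ := hjm (by omega)
  have hm : m - 1 + 1 = m := by omega
  have hsb : sb b u m = sb b u (m - 1) + Lb b u (m - 1) := by
    conv_lhs => rw [← hm]
    exact sb_succ _
  apply w_inside_false hb (m := m - 1)
  · omega
  · rw [hm]; omega

lemma w_eval_mid (hb : 1 ≤ b) {i j m t : ℕ} (hi : i + j = sb b u m) :
    ∀ τ, τ < (psiW b (fac u m t)).length →
      psiInf b u (i + j + τ) = (psiW b (fac u m t)).getD τ false := by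
  intro τ hτ
  rw [hi]
  exact w_segment hb m t τ hτ

lemma w_eval_one (hb : 1 ≤ b) {i j m t : ℕ} (hi : i + j = sb b u m) :
    psiInf b u (i + j + (psiW b (fac u m t)).length) = true := by
  rw [hi, ← sb_add]
  exact w_at_sb hb _

lemma w_eval_tail (hb : 1 ≤ b) {i j m t : ℕ} (hi : i + j = sb b u m) :
    ∀ ρ, 1 ≤ ρ → ρ < b → psiInf b u (i + j + (psiW b (fac u m t)).length + ρ) = false := by
  intro ρ h1 h2
  rw [hi, ← sb_add]
  exact w_mid_false hb _ ρ h1 (by have := Lb_ge (u := u) hb (m + t); omega)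

lemma w_eval_ext (hb : 1 ≤ b) {i j m t n : ℕ} (hi : i + j = sb b u m)
    (hn : n = j + (psiW b (fac u m t)).length + b) :
    psiInf b u (i + n) = !(u (m + t)) := by
  have hpos : i + n = sb b u (m + t) + b := by
    have := sb_add (b := b) (u := u) m t
    omega
  rw [hpos]
  cases hc : u (m + t)
  · have hL : Lb b u (m + t) = b := by rw [Lb_eq hb, hc]; simp
    have : sb b u (m + t) + b = sb b u (m + t + 1) := by rw [sb_succ, hL]
    rw [this, w_at_sb hb]
    rfl
  · have hL : Lb b u (m + t) = b + 1 := by rw [Lb_eq hb, hc]; simp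
    rw [w_mid_false hb _ b hb (by omega)]
    rfl

/-- Windows with identical parse data are identical. -/
lemma w_window_eq (hb : 1 ≤ b) {i i' j m m' t n : ℕ}
    (hi : i + j = sb b u m) (hi' : i' + j = sb b u m')
    (hd : fac u m t = fac u m' t)
    (hjm : 1 ≤ j → 1 ≤ m ∧ j < Lb b u (m - 1))
    (hjm' : 1 ≤ j → 1 ≤ m' ∧ j < Lb b u (m' - 1))
    (hn : n = j + (psiW b (fac u m t)).length + b) :
    fac (psiInf b u) i n = fac (psiInf b u) i' n := by
  rw [fac_eq_iff]
  intro τ hτ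
  set E := (psiW b (fac u m t)).length with hE
  rcases Nat.lt_or_ge τ j with h1 | h1
  · rw [w_eval_lead hb hi hjm τ h1, w_eval_lead hb hi' hjm' τ h1]
  rcases Nat.lt_or_ge τ (j + E) with h2 | h2
  · have e1 : i + τ = i + j + (τ - j) := by omega
    have e2 : i' + τ = i' + j + (τ - j) := by omega
    rw [e1, e2, w_eval_mid hb (t := t) hi (τ - j) (by omega),
      w_eval_mid hb (t := t) hi' (τ - j) (by rw [← hd]; omega)]
    rw [hd]
  rcases Nat.eq_or_lt_of_le h2 with h3 | h3
  · have e1 : i + τ = i + j + E := by omega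
    have e2 : i' + τ = i' + j + E := by omega
    rw [e1, e2, w_eval_one hb (t := t) hi]
    have := w_eval_one hb (t := t) hi'
    rw [← hd] at this
    rw [this]
  · have hρ : 1 ≤ τ - (j + E) ∧ τ - (j + E) < b := by omega
    have e1 : i + τ = i + j + E + (τ - (j + E)) := by omega
    have e2 : i' + τ = i' + j + E + (τ - (j + E)) := by omega
    rw [e1, e2, w_eval_tail hb (t := t) hi _ hρ.1 hρ.2]
    have := w_eval_tail hb (t := t) hi' (τ - (j + E)) hρ.1 (by omega)
    rw [← hd] at this
    rw [this]

lemma occ_split {x : ℕ → Bool} {v : List Bool} {a : Bool} {n i : ℕ} (hlen : v.length = n)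
    (h : v ++ [a] = fac x i (n + 1)) : v = fac x i n ∧ x (i + n) = a := by
  rw [fac_succ] at h
  have h2 := List.append_inj h (by simp [hlen])
  refine ⟨h2.1, ?_⟩
  have := h2.2
  simp only [List.cons.injEq, and_true] at this
  exact this.symm

lemma factor_tail {x : ℕ → Bool} {z : List Bool} {a : Bool} {n : ℕ}
    (h : a :: z ∈ Facs x (n + 1)) : z ∈ Facs x n := by
  obtain ⟨i, hi⟩ := mem_Facs.1 h
  rw [fac_cons] at hi
  exact mem_Facs.2 ⟨i + 1, (List.cons.injEq _ _ _ _ ▸ hi).2⟩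

end WEval

end SturmAux

namespace SturmAux

section WParse

variable {b : ℕ} {u : ℕ → Bool}

/-- Parsing a right-special factor of `psiInf b u` of length `≥ b`. -/
lemma w_parse (hb : 1 ≤ b) {v : List Bool} {n : ℕ} (hbn : b ≤ n)
    (hv : v ∈ RSset (psiInf b u) n) :
    ∃ m m' t j i i',
      i + j = sb b u m ∧ i' + j = sb b u m' ∧
      fac u m t = fac u m' t ∧
      u (m + t) = false ∧ u (m' + t) = true ∧
      n = j + (psiW b (fac u m t)).length + b ∧
      j ≤ b ∧
      (1 ≤ j → 1 ≤ m ∧ j < Lb b u (m - 1) ∧ 1 ≤ m' ∧ j < Lb b u (m' - 1)) ∧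
      v = fac (psiInf b u) i n := by
  obtain ⟨htrue, hfalse⟩ := hv
  have hlen : v.length = n := by
    have h := htrue.1
    simp only [List.length_append, List.length_singleton] at h
    omega
  obtain ⟨i, hiocc⟩ := mem_Facs.1 htrue
  obtain ⟨hvi, hwi⟩ := occ_split hlen hiocc
  obtain ⟨i2, hiocc2⟩ := mem_Facs.1 hfalse
  obtain ⟨hvi2, hwi2⟩ := occ_split hlen hiocc2
  have hvv : ∀ τ, τ < n → psiInf b u (i + τ) = psiInf b u (i2 + τ) := by
    have h : fac (psiInf b u) i n = fac (psiInf b u) i2 n := by rw [← hvi, ← hvi2]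
    exact fun τ hτ => (fac_eq_iff.1 h) τ hτ
  -- the window contains a true letter
  have htruewin : ∃ τ, τ < n ∧ psiInf b u (i + τ) = true := by
    by_contra hcon
    push_neg at hcon
    obtain ⟨mg, hg1, hg2⟩ := exists_sb_near (u := u) hb i2
    have hτg : sb b u mg = i2 + (sb b u mg - i2) := by omega
    rcases Nat.lt_or_ge (sb b u mg - i2) n with hlt | hge
    · have h1 := hcon (sb b u mg - i2) hlt
      rw [hvv _ hlt, ← hτg] at h1
      rw [w_at_sb hb] at h1
      simp at h1
    · have hn' : sb b u mg = i2 + n := by omega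
      have := w_at_sb (u := u) hb mg
      rw [hn'] at this
      rw [hwi2] at this
      simp at this
  obtain ⟨m1, hm1⟩ := (w_true_iff hb (i + n)).1 hwi
  set m0 := Mfun b u i with hm0def
  have hm0i : i ≤ sb b u m0 := Mfun_spec hb i
  obtain ⟨τ0, hτ0n, hwτ0⟩ := htruewin
  obtain ⟨mt, hmt⟩ := (w_true_iff hb (i + τ0)).1 hwτ0
  have hm0mt : sb b u m0 ≤ sb b u mt :=
    (sb_strict_mono (u := u) hb).monotone (Mfun_le (by omega))
  have hm0m1 : m0 < m1 :=
    ((sb_strict_mono (u := u) hb).lt_iff_lt).1 (by omega)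
  set t := m1 - m0 - 1 with ht_def
  set j := sb b u m0 - i with hj_def
  have hj_eq : i + j = sb b u m0 := by omega
  have hm1t : m1 = m0 + t + 1 := by omega
  set E := (psiW b (fac u m0 t)).length with hE_def
  have hsbm0t : sb b u (m0 + t) = sb b u m0 + E := sb_add m0 t
  have hsbm1 : sb b u m1 = sb b u (m0 + t) + Lb b u (m0 + t) := by
    rw [hm1t]; exact sb_succ _
  have hnE : n = j + E + Lb b u (m0 + t) := by omega
  have hLbge0 : b ≤ Lb b u (m0 + t) := Lb_ge hb _
  have hjm : 1 ≤ j → 1 ≤ m0 ∧ j < Lb b u (m0 - 1) := by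
    intro hj1
    have hm0pos : 1 ≤ m0 := by
      by_contra h
      push_neg at h
      interval_cases m0
      · simp at hj_eq
        omega
    have hmin := Mfun_min (u := u) hb (show m0 - 1 < m0 by omega)
    have hsb : sb b u m0 = sb b u (m0 - 1) + Lb b u (m0 - 1) := by
      conv_lhs => rw [show m0 = (m0 - 1) + 1 by omega]
      exact sb_succ _
    exact ⟨hm0pos, by omega⟩
  have hjn : j < n := by omega
  -- first true of the second occurrence
  have hlead : ∀ τ, τ < j → psiInf b u (i + τ) = false := w_eval_lead hb hj_eq hjm
  have hw2j : psiInf b u (i2 + j) = true := by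
    rw [← hvv j hjn, hj_eq]
    exact w_at_sb hb _
  obtain ⟨mc, hmc⟩ := (w_true_iff hb (i2 + j)).1 hw2j
  set m0' := Mfun b u i2 with hm0'def
  have hm0'i : i2 ≤ sb b u m0' := Mfun_spec hb i2
  have hm0'le : m0' ≤ mc := Mfun_le (by omega)
  have hj2_eq : i2 + j = sb b u m0' := by
    rcases Nat.eq_or_lt_of_le hm0'le with heq | hlt
    · rw [heq]; exact hmc
    · exfalso
      have h1 : sb b u m0' < sb b u mc := sb_strict_mono hb hlt
      have h2 : psiInf b u (i2 + (sb b u m0' - i2)) = false := by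
        rw [← hvv _ (by omega)]
        exact hlead _ (by omega)
      rw [show i2 + (sb b u m0' - i2) = sb b u m0' by omega] at h2
      rw [w_at_sb hb] at h2
      simp at h2
  have hjm' : 1 ≤ j → 1 ≤ m0' ∧ j < Lb b u (m0' - 1) := by
    intro hj1
    have hm0pos : 1 ≤ m0' := by
      by_contra h
      push_neg at h
      interval_cases m0'
      · simp at hj2_eq
        omega
    have hmin := Mfun_min (u := u) hb (show m0' - 1 < m0' by omega)
    have hsb : sb b u m0' = sb b u (m0' - 1) + Lb b u (m0' - 1) := by
      conv_lhs => rw [show m0' = (m0' - 1) + 1 by omega]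
      exact sb_succ _
    exact ⟨hm0pos, by omega⟩
  -- induction: the block starts line up
  have hP : ∀ k, k ≤ t → sb b u (m0' + k) + i = sb b u (m0 + k) + i2 := by
    intro k
    induction k with
    | zero =>
      intro _
      simp only [Nat.add_zero]
      omega
    | succ p ih =>
      intro hk
      have hPp := ih (by omega)
      simp only [← Nat.add_assoc]
      have hBlt : sb b u (m0 + p + 1) < sb b u m1 :=
        sb_strict_mono hb (by omega)
      have hmono1 : sb b u m0 ≤ sb b u (m0 + p) :=
        (sb_strict_mono (u := u) hb).monotone (by omega)
      have hmono2 : sb b u (m0 + p) < sb b u (m0 + p + 1) :=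
        sb_strict_mono hb (by omega)
      have hτBn : sb b u (m0 + p + 1) - i < n := by omega
      have hwB : psiInf b u (i2 + (sb b u (m0 + p + 1) - i)) = true := by
        rw [← hvv _ hτBn, show i + (sb b u (m0 + p + 1) - i) = sb b u (m0 + p + 1) by omega]
        exact w_at_sb hb _
      obtain ⟨mB, hmB⟩ := (w_true_iff hb _).1 hwB
      have h1 : sb b u (m0' + p) < sb b u mB := by omega
      have hmBgt : m0' + p < mB := ((sb_strict_mono (u := u) hb).lt_iff_lt).1 h1
      have h2 : sb b u (m0' + p + 1) ≤ sb b u mB :=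
        (sb_strict_mono (u := u) hb).monotone (by omega)
      rcases Nat.eq_or_lt_of_le h2 with heq | hlt2
      · rw [heq]
        omega
      · exfalso
        have hgt : sb b u (m0' + p) < sb b u (m0' + p + 1) := sb_strict_mono hb (by omega)
        have hσeq : sb b u (m0' + p + 1) = i2 + (sb b u (m0' + p + 1) - i2) := by omega
        have hσn : sb b u (m0' + p + 1) - i2 < n := by omega
        have hf : psiInf b u (i2 + (sb b u (m0' + p + 1) - i2)) = false := by
          rw [← hvv _ hσn]
          apply w_inside_false hb (m := m0 + p)
          · omega
          · omega
        rw [← hσeq, w_at_sb hb] at hf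
        simp at hf
  -- equal letters
  have hletters : ∀ k, k < t → u (m0 + k) = u (m0' + k) := by
    intro k hk
    have h1 := hP k (by omega)
    have h2 := hP (k + 1) (by omega)
    simp only [← Nat.add_assoc] at h2
    have e1 := sb_succ (b := b) (u := u) (m0 + k)
    have e2 := sb_succ (b := b) (u := u) (m0' + k)
    have hLb : Lb b u (m0' + k) = Lb b u (m0 + k) := by omega
    rw [Lb_eq hb, Lb_eq hb] at hLb
    cases hu1 : u (m0 + k) <;> cases hu2 : u (m0' + k) <;>
      rw [hu1, hu2] at hLb <;> simp at hLb <;> rfl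
  have hfaceq : fac u m0 t = fac u m0' t := fac_eq_iff.2 hletters
  -- the trailing block comparison
  have hPt := hP t le_rfl
  have htail2 : ∀ σ, j + E < σ → σ ≤ n → psiInf b u (i2 + σ) = false := by
    intro σ h1 h2
    rcases Nat.eq_or_lt_of_le h2 with heq | hlt
    · rw [heq]; exact hwi2
    · rw [← hvv σ hlt]
      apply w_inside_false hb (m := m0 + t)
      · omega
      · rw [← hm1t]; omega
  have hgt' : sb b u (m0' + t) < sb b u (m0' + t + 1) := sb_strict_mono hb (by omega)
  have hbig : i2 + n < sb b u (m0' + t + 1) := by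
    by_contra h
    push_neg at h
    have hσ : j + E < sb b u (m0' + t + 1) - i2 := by omega
    have hf := htail2 _ hσ (by omega)
    rw [show i2 + (sb b u (m0' + t + 1) - i2) = sb b u (m0' + t + 1) by omega,
      w_at_sb hb] at hf
    simp at hf
  have e2 := sb_succ (b := b) (u := u) (m0' + t)
  have hL' : Lb b u (m0 + t) < Lb b u (m0' + t) := by omega
  have hLble : Lb b u (m0' + t) ≤ b + 1 := Lb_le hb _
  have hc : u (m0 + t) = false ∧ u (m0' + t) = true := by
    have hLb1 := Lb_eq (u := u) hb (m0 + t)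
    have hLb2 := Lb_eq (u := u) hb (m0' + t)
    cases hu1 : u (m0 + t) <;> cases hu2 : u (m0' + t) <;>
      rw [hu1] at hLb1 <;> rw [hu2] at hLb2 <;> simp at hLb1 hLb2 <;>
      first
        | exact ⟨rfl, rfl⟩
        | omega
  have hnfin : n = j + E + b := by
    have := hc.1
    have hLbeq : Lb b u (m0 + t) = b := by
      rw [Lb_eq hb, this]; simp
    omega
  have hjb : j ≤ b := by
    rcases Nat.eq_zero_or_pos j with h0 | hj1
    · omega
    · have := (hjm (by omega)).2
      have hLle := Lb_le (u := u) hb (m0 - 1)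
      -- j < Lb (m0-1) ≤ b+1, but also need j ≤ b: if j = b+1? j < Lb ≤ b+1 so j ≤ b ✓
      omega
  refine ⟨m0, m0', t, j, i, i2, hj_eq, hj2_eq, hfaceq, hc.1, hc.2, hnfin, hjb, ?_, hvi⟩
  intro hj1
  exact ⟨(hjm hj1).1, (hjm hj1).2, (hjm' hj1).1, (hjm' hj1).2⟩

end WParse

end SturmAux

namespace SturmAux

section UFacts

variable {b : ℕ} {u : ℕ → Bool}

noncomputable def RSf (u : ℕ → Bool) (hu : Sturmian u) (t : ℕ) : List Bool :=
  (Set.ncard_eq_one.mp (sturmian_iff_RS.1 hu t)).choose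

lemma RSf_spec (hu : Sturmian u) (t : ℕ) : RSset u t = {RSf u hu t} :=
  (Set.ncard_eq_one.mp (sturmian_iff_RS.1 hu t)).choose_spec

lemma mem_RSset_iff (hu : Sturmian u) {v : List Bool} {t : ℕ} :
    v ∈ RSset u t ↔ v = RSf u hu t := by
  rw [RSf_spec hu t]
  exact Set.mem_singleton_iff

lemma RSf_mem (hu : Sturmian u) (t : ℕ) : RSf u hu t ∈ RSset u t :=
  (mem_RSset_iff hu).2 rfl

lemma RSf_length (hu : Sturmian u) (t : ℕ) : (RSf u hu t).length = t := by
  have h := (RSf_mem hu t).1.1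
  simp only [List.length_append, List.length_singleton] at h
  omega

lemma RSf_zero (hu : Sturmian u) : RSf u hu 0 = [] :=
  List.eq_nil_of_length_eq_zero (RSf_length hu 0)

lemma RSf_occ (hu : Sturmian u) (t : ℕ) (c : Bool) :
    ∃ p, fac u p (t + 1) = RSf u hu t ++ [c] := by
  have hm := RSf_mem hu t
  cases c
  · obtain ⟨p, hp⟩ := mem_Facs.1 hm.2
    exact ⟨p, hp.symm⟩
  · obtain ⟨p, hp⟩ := mem_Facs.1 hm.1
    exact ⟨p, hp.symm⟩

lemma RSf_chain (hu : Sturmian u) (t : ℕ) :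
    ∃ a, RSf u hu (t + 1) = a :: RSf u hu t := by
  have hlen := RSf_length hu (t + 1)
  rcases hcons : RSf u hu (t + 1) with _ | ⟨a, d⟩
  · rw [hcons] at hlen; simp at hlen
  · refine ⟨a, ?_⟩
    have hm := RSf_mem hu (t + 1)
    rw [hcons] at hm
    have hd : d ∈ RSset u t := by
      obtain ⟨h1, h2⟩ := hm
    
      rw [List.cons_append] at h1 h2
      exact ⟨factor_tail h1, factor_tail h2⟩
    rw [(mem_RSset_iff hu).1 hd]

lemma exists_true_pos (hu : Sturmian u) : ∃ p, u p = true := by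
  have h := (RSf_mem hu 0).1
  rw [RSf_zero hu] at h
  obtain ⟨p, hp⟩ := mem_Facs.1 h
  have hfac1 : fac u p 1 = [u p] := by simp [fac, List.range_succ]
  rw [hfac1] at hp
  simp only [List.nil_append, List.cons.injEq] at hp
  exact ⟨p, hp.1.symm⟩

/-- the length of `psiW` of the right special factor of length `t` -/
noncomputable def eF (b : ℕ) (u : ℕ → Bool) (hu : Sturmian u) (t : ℕ) : ℕ :=
  (psiW b (RSf u hu t)).length

lemma eF_zero (hu : Sturmian u) : eF b u hu 0 = 0 := by
  rw [eF, RSf_zero hu]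
  rfl

lemma eF_step (hb : 1 ≤ b) (hu : Sturmian u) (t : ℕ) :
    (eF b u hu (t + 1) = eF b u hu t + b ∧ RSf u hu (t + 1) = false :: RSf u hu t) ∨
    (eF b u hu (t + 1) = eF b u hu t + b + 1 ∧ RSf u hu (t + 1) = true :: RSf u hu t) := by
  obtain ⟨a, ha⟩ := RSf_chain hu t
  have hlen : eF b u hu (t + 1) = (psiL b a).length + eF b u hu t := by
    rw [eF, ha, psiW_cons, List.length_append]
    rfl
  rw [psiL_length hb] at hlen
  cases a
  · left
    refine ⟨by rw [hlen]; simp; omega, ha⟩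
  · right
    refine ⟨by rw [hlen]; simp; omega, ha⟩

lemma eF_step_bounds (hb : 1 ≤ b) (hu : Sturmian u) (t : ℕ) :
    eF b u hu t + b ≤ eF b u hu (t + 1) ∧ eF b u hu (t + 1) ≤ eF b u hu t + b + 1 := by
  rcases eF_step hb hu t with ⟨h, -⟩ | ⟨h, -⟩ <;> omega

lemma eF_mono (hb : 1 ≤ b) (hu : Sturmian u) {t t' : ℕ} (h : t ≤ t') :
    eF b u hu t ≤ eF b u hu t' := by
  induction t' with
  | zero => simp_all
  | succ p ih =>
    rcases Nat.lt_or_ge t (p + 1) with h1 | h1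
    · have := ih (by omega)
      have := (eF_step_bounds hb hu p).1
      omega
    · have ht : t = p + 1 := by omega
      rw [ht]

lemma eF_lt (hb : 1 ≤ b) (hu : Sturmian u) {t t' : ℕ} (h : t < t') :
    eF b u hu t + b ≤ eF b u hu t' := by
  have h1 := (eF_step_bounds hb hu t).1
  have h2 := eF_mono hb hu (show t + 1 ≤ t' by omega)
  omega

lemma eF_lt2 (hb : 1 ≤ b) (hu : Sturmian u) {t t' : ℕ} (h : t + 1 < t') :
    eF b u hu t + b + b ≤ eF b u hu t' := by
  have h1 := (eF_step_bounds hb hu t).1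
  have h2 := (eF_step_bounds hb hu (t + 1)).1
  have h3 := eF_mono hb hu (show t + 1 + 1 ≤ t' by omega)
  omega

lemma eF_ge (hb : 1 ≤ b) (hu : Sturmian u) (t : ℕ) : t ≤ eF b u hu t := by
  induction t with
  | zero => omega
  | succ p ih =>
    have := (eF_step_bounds hb hu p).1
    omega

lemma mem_RS_of_occ {x : ℕ → Bool} {m m' t : ℕ} (hfac : fac x m t = fac x m' t)
    (hf : x (m + t) = false) (ht : x (m' + t) = true) : fac x m t ∈ RSset x t := by
  constructor
  · have h : fac x m' (t + 1) = fac x m t ++ [true] := by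
      rw [fac_succ, ht, ← hfac]
    rw [← h]
    exact fac_mem_Facs _ _ _
  · have h : fac x m (t + 1) = fac x m t ++ [false] := by
      rw [fac_succ, hf]
    rw [← h]
    exact fac_mem_Facs _ _ _

lemma occ_head_split {x : ℕ → Bool} {m t : ℕ} {d : List Bool} {c : Bool} (hd : d.length = t)
    (h : fac x m (t + 1) = d ++ [c]) : fac x m t = d ∧ x (m + t) = c := by
  rw [fac_succ] at h
  have h2 := List.append_inj h (by simp [hd])
  refine ⟨h2.1, ?_⟩
  have := h2.2
  simp only [List.cons.injEq, and_true] at this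
  exact this

end UFacts

end SturmAux

namespace SturmAux

section Assembly

variable {b : ℕ} {u : ℕ → Bool}

lemma RS_w_build (hb : 1 ≤ b) {m m' t j n : ℕ}
    (hf : u (m + t) = false) (ht : u (m' + t) = true)
    (hfac : fac u m t = fac u m' t)
    (hn : n = j + (psiW b (fac u m t)).length + b)
    (hjm : 1 ≤ j → 1 ≤ m ∧ j < Lb b u (m - 1))
    (hjm' : 1 ≤ j → 1 ≤ m' ∧ j < Lb b u (m' - 1)) :
    fac (psiInf b u) (sb b u m - j) n ∈ RSset (psiInf b u) n := by
  have hieq : (sb b u m - j) + j = sb b u m := by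
    rcases Nat.eq_zero_or_pos j with h0 | h1
    · omega
    · obtain ⟨hm1, hjL⟩ := hjm h1
      have hsb : sb b u m = sb b u (m - 1) + Lb b u (m - 1) := by
        conv_lhs => rw [show m = (m - 1) + 1 by omega]
        exact sb_succ _
      omega
  have hieq' : (sb b u m' - j) + j = sb b u m' := by
    rcases Nat.eq_zero_or_pos j with h0 | h1
    · omega
    · obtain ⟨hm1, hjL⟩ := hjm' h1
      have hsb : sb b u m' = sb b u (m' - 1) + Lb b u (m' - 1) := by
        conv_lhs => rw [show m' = (m' - 1) + 1 by omega]
        exact sb_succ _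
      omega
  have hn' : n = j + (psiW b (fac u m' t)).length + b := by rw [← hfac]; exact hn
  constructor
  · have hext : psiInf b u ((sb b u m - j) + n) = true := by
      rw [w_eval_ext hb hieq hn, hf]
      rfl
    rw [← hext, ← fac_succ]
    exact fac_mem_Facs _ _ _
  · have hwin := w_window_eq hb hieq hieq' hfac hjm hjm' hn
    rw [hwin]
    have hext' : psiInf b u ((sb b u m' - j) + n) = false := by
      rw [w_eval_ext hb hieq' hn', ht]
      rfl
    rw [← hext', ← fac_succ]
    exact fac_mem_Facs _ _ _

lemma RS_w_unique (hb : 1 ≤ b) (hu : Sturmian u) {n : ℕ} (hbn : b ≤ n)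
    {v v' : List Bool} (hv : v ∈ RSset (psiInf b u) n) (hv' : v' ∈ RSset (psiInf b u) n) :
    v = v' := by
  obtain ⟨m, m2, t, j, i, i2, hieq, hieq2, hfaceq, hcf, hct, hn, hjb, hjm, hvfac⟩ :=
    w_parse hb hbn hv
  obtain ⟨p, p2, t', j', iq, iq2, hpeq, hpeq2, hfaceq', hcf', hct', hn', hjb', hjm', hvfac'⟩ :=
    w_parse hb hbn hv'
  have hd : fac u m t = RSf u hu t := (mem_RSset_iff hu).1 (mem_RS_of_occ hfaceq hcf hct)
  have hd' : fac u p t' = RSf u hu t' := (mem_RSset_iff hu).1 (mem_RS_of_occ hfaceq' hcf' hct')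
  have hE : (psiW b (fac u m t)).length = eF b u hu t := by rw [hd]; rfl
  have hE' : (psiW b (fac u p t')).length = eF b u hu t' := by rw [hd']; rfl
  have hnA : n = j + eF b u hu t + b := by rw [← hE]; exact hn
  have hnB : n = j' + eF b u hu t' + b := by rw [← hE']; exact hn'
  have key : ∀ (tA tB jA jB mA mA2 : ℕ), tA < tB →
      n = jA + eF b u hu tA + b → n = jB + eF b u hu tB + b → jA ≤ b →
      u (mA + tA) = false → u (mA2 + tA) = true → fac u mA tA = fac u mA2 tA →
      (1 ≤ jA → 1 ≤ mA ∧ jA < Lb b u (mA - 1) ∧ 1 ≤ mA2 ∧ jA < Lb b u (mA2 - 1)) → False := by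
    intro tA tB jA jB mA mA2 htlt hnA' hnB' hjA hfA htA hfacA hjmA
    have h1 : eF b u hu tA + b ≤ eF b u hu tB := eF_lt hb hu htlt
    have hjAb : jA = b := by omega
    have hjB0 : jB = 0 := by omega
    have heFeq : eF b u hu tB = eF b u hu tA + b := by omega
    have htB : tB = tA + 1 := by
      by_contra hne
      have := eF_lt2 hb hu (show tA + 1 < tB by omega)
      omega
    rcases eF_step hb hu tA with ⟨-, hfalse_cons⟩ | ⟨hlen2, -⟩
    swap
    · rw [← htB] at hlen2
      omega
    have hb1 : 1 ≤ jA := by omega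
    obtain ⟨hmA1, hjLA, hmA21, hjLA2⟩ := hjmA hb1
    have huA : u (mA - 1) = true := by
      have hL := Lb_eq (u := u) hb (mA - 1)
      cases hcc : u (mA - 1)
      · rw [hcc] at hL; simp at hL; omega
      · rfl
    have huA2 : u (mA2 - 1) = true := by
      have hL := Lb_eq (u := u) hb (mA2 - 1)
      cases hcc : u (mA2 - 1)
      · rw [hcc] at hL; simp at hL; omega
      · rfl
    have hoccA : fac u (mA - 1) (tA + 1) = true :: fac u mA tA := by
      rw [fac_cons, show mA - 1 + 1 = mA by omega, huA]
    have hoccA2 : fac u (mA2 - 1) (tA + 1) = true :: fac u mA2 tA := by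
      rw [fac_cons, show mA2 - 1 + 1 = mA2 by omega, huA2]
    have hfac2 : fac u (mA - 1) (tA + 1) = fac u (mA2 - 1) (tA + 1) := by
      rw [hoccA, hoccA2, hfacA]
    have hfA' : u ((mA - 1) + (tA + 1)) = false := by
      rw [show (mA - 1) + (tA + 1) = mA + tA by omega]; exact hfA
    have htA' : u ((mA2 - 1) + (tA + 1)) = true := by
      rw [show (mA2 - 1) + (tA + 1) = mA2 + tA by omega]; exact htA
    have hmemEq : fac u (mA - 1) (tA + 1) = RSf u hu (tA + 1) :=
      (mem_RSset_iff hu).1 (mem_RS_of_occ hfac2 hfA' htA')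
    have hcontr : false :: RSf u hu tA = true :: fac u mA tA := by
      rw [← hfalse_cons, ← hmemEq, hoccA]
    simp at hcontr
  rcases lt_trichotomy t t' with hlt | heq | hgt
  · exact absurd (key t t' j j' m m2 hlt hnA hnB hjb hcf hct hfaceq hjm) (not_false)
  · subst heq
    have hjj : j = j' := by omega
    have hfacmp : fac u m t = fac u p t := by rw [hd, hd']
    have hjm2 : 1 ≤ j → 1 ≤ m ∧ j < Lb b u (m - 1) := fun h => ⟨(hjm h).1, (hjm h).2.1⟩
    have hjm2' : 1 ≤ j → 1 ≤ p ∧ j < Lb b u (p - 1) := by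
      intro h
      rw [hjj] at h ⊢
      exact ⟨(hjm' h).1, (hjm' h).2.1⟩
    have hpeqj : iq + j = sb b u p := by rw [hjj]; exact hpeq
    have hwin := w_window_eq hb hieq hpeqj hfacmp hjm2 hjm2' hn
    rw [hvfac, hvfac', hwin]
  · exact absurd (key t' t j' j p p2 hgt hnB hnA hjb' hcf' hct' hfaceq' hjm') (not_false)

lemma RS_w_exists (hb : 1 ≤ b) (hu : Sturmian u) {n : ℕ} (hbn : b ≤ n) :
    ∃ v, v ∈ RSset (psiInf b u) n := by
  classical
  have hPex : ∃ q, n - b < eF b u hu q :=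
    ⟨n - b + 1, by have := eF_ge hb hu (n - b + 1); omega⟩
  set q0 := Nat.find hPex with hq0
  have hspec : n - b < eF b u hu q0 := Nat.find_spec hPex
  have hq0pos : 1 ≤ q0 := by
    rcases Nat.eq_zero_or_pos q0 with h0 | h1
    · rw [h0, eF_zero hu] at hspec; omega
    · exact h1
  set t := q0 - 1 with htdef
  have hmin : ¬ (n - b < eF b u hu t) := Nat.find_min hPex (by omega)
  push_neg at hmin
  have hspec' : n - b < eF b u hu (t + 1) := by
    rw [show t + 1 = q0 by omega]; exact hspec
  set j := n - b - eF b u hu t with hjdef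
  have hnj : n = j + eF b u hu t + b := by omega
  have hbounds := eF_step_bounds hb hu t
  have hjb : j ≤ b := by omega
  have heFdef : eF b u hu t = (psiW b (RSf u hu t)).length := rfl
  rcases Nat.lt_or_ge j b with hjlt | hjge
  · obtain ⟨p1, hp1⟩ := RSf_occ hu t false
    obtain ⟨m, hm1, hmeq⟩ := sturmian_recurrent hu (t + 1) 1 p1
    rw [hp1] at hmeq
    obtain ⟨hmfac, hmletter⟩ := occ_head_split (RSf_length hu t) hmeq
    obtain ⟨p2, hp2⟩ := RSf_occ hu t true
    obtain ⟨m', hm1', hmeq'⟩ := sturmian_recurrent hu (t + 1) 1 p2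
    rw [hp2] at hmeq'
    obtain ⟨hmfac', hmletter'⟩ := occ_head_split (RSf_length hu t) hmeq'
    refine ⟨_, RS_w_build (j := j) (n := n) hb hmletter hmletter' (by rw [hmfac, hmfac']) ?_ ?_ ?_⟩
    · rw [hmfac, ← heFdef]; exact hnj
    · intro hj1; exact ⟨by omega, by have := Lb_ge (u := u) hb (m - 1); omega⟩
    · intro hj1; exact ⟨by omega, by have := Lb_ge (u := u) hb (m' - 1); omega⟩
  · have hjb' : j = b := le_antisymm hjb hjge
    have hstep2 : RSf u hu (t + 1) = true :: RSf u hu t := by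
      rcases eF_step hb hu t with ⟨h1, -⟩ | ⟨-, h2⟩
      · omega
      · exact h2
    obtain ⟨p1, hp1⟩ := RSf_occ hu (t + 1) false
    rw [hstep2, List.cons_append, fac_cons] at hp1
    simp only [List.cons.injEq] at hp1
    obtain ⟨hup1, hp1'⟩ := hp1
    obtain ⟨hq1, hq1letter⟩ := occ_head_split (RSf_length hu t) hp1'
    obtain ⟨p2, hp2⟩ := RSf_occ hu (t + 1) true
    rw [hstep2, List.cons_append, fac_cons] at hp2
    simp only [List.cons.injEq] at hp2
    obtain ⟨hup2, hp2'⟩ := hp2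
    obtain ⟨hq2, hq2letter⟩ := occ_head_split (RSf_length hu t) hp2'
    refine ⟨_, RS_w_build (j := j) (n := n) hb hq1letter hq2letter (by rw [hq1, hq2]) ?_ ?_ ?_⟩
    · rw [hq1, ← heFdef]; exact hnj
    · intro hj1
      refine ⟨by omega, ?_⟩
      have : Lb b u (p1 + 1 - 1) = b + 1 := by
        rw [show p1 + 1 - 1 = p1 by omega, Lb_eq hb, hup1]
        simp
      omega
    · intro hj1
      refine ⟨by omega, ?_⟩
      have : Lb b u (p2 + 1 - 1) = b + 1 := by
        rw [show p2 + 1 - 1 = p2 by omega, Lb_eq hb, hup2]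
        simp
      omega

lemma fac_eq_replicate {x : ℕ → Bool} {i n : ℕ} (h : ∀ τ, τ < n → x (i + τ) = false) :
    fac x i n = List.replicate n false := by
  apply List.ext_getElem (by simp)
  intro τ h1 h2
  simp only [fac_length] at h1
  rw [fac_getElem x i n τ h1, List.getElem_replicate]
  exact h τ h1

lemma RSset_w_small (hb : 1 ≤ b) (hu : Sturmian u) {n : ℕ} (hnb : n < b) :
    RSset (psiInf b u) n = {List.replicate n false} := by
  obtain ⟨p, hp⟩ := exists_true_pos hu
  have hLp : Lb b u p = b + 1 := by rw [Lb_eq hb, hp]; simp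
  apply Set.eq_singleton_iff_unique_mem.2
  constructor
  · constructor
    · have hoccB : fac (psiInf b u) (sb b u p + (b + 1 - n)) (n + 1)
          = List.replicate n false ++ [true] := by
        rw [fac_succ]
        congr 1
        · apply fac_eq_replicate
          intro τ hτ
          rw [show sb b u p + (b + 1 - n) + τ = sb b u p + (b + 1 - n + τ) by omega]
          exact w_mid_false hb p _ (by omega) (by omega)
        · rw [show sb b u p + (b + 1 - n) + n = sb b u (p + 1) from by
            rw [sb_succ, hLp]; omega]
          rw [w_at_sb hb]
      rw [← hoccB]; exact fac_mem_Facs _ _ _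
    · have hoccA : fac (psiInf b u) (sb b u p + 1) (n + 1)
          = List.replicate n false ++ [false] := by
        rw [← List.replicate_succ']
        apply fac_eq_replicate
        intro τ hτ
        rw [show sb b u p + 1 + τ = sb b u p + (1 + τ) by omega]
        exact w_mid_false hb p _ (by omega) (by omega)
      rw [← hoccA]; exact fac_mem_Facs _ _ _
  · intro v hv
    obtain ⟨htrue, -⟩ := hv
    have hlen : v.length = n := by
      have h := htrue.1
      simp only [List.length_append, List.length_singleton] at h
      omega
    obtain ⟨i, hiocc⟩ := mem_Facs.1 htrue
    obtain ⟨hvi, hwi⟩ := occ_split hlen hiocc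
    obtain ⟨mB, hmB⟩ := (w_true_iff hb _).1 hwi
    rw [hvi]
    apply fac_eq_replicate
    intro τ hτ
    by_contra hcon
    have htt : psiInf b u (i + τ) = true := by
      cases hx : psiInf b u (i + τ)
      · exact absurd hx hcon
      · rfl
    obtain ⟨mc, hmc⟩ := (w_true_iff hb _).1 htt
    have hlt : mc < mB := ((sb_strict_mono (u := u) hb).lt_iff_lt).1 (by omega)
    have hmono : sb b u mc ≤ sb b u (mB - 1) :=
      (sb_strict_mono (u := u) hb).monotone (by omega)
    have hsucc : sb b u mB = sb b u (mB - 1) + Lb b u (mB - 1) := by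
      conv_lhs => rw [show mB = (mB - 1) + 1 by omega]
      exact sb_succ _
    have hLge := Lb_ge (u := u) hb (mB - 1)
    omega

lemma RSset_w_ncard (hb : 1 ≤ b) (hu : Sturmian u) (n : ℕ) :
    (RSset (psiInf b u) n).ncard = 1 := by
  rcases Nat.lt_or_ge n b with h | h
  · rw [RSset_w_small hb hu h]; exact Set.ncard_singleton _
  · obtain ⟨v, hv⟩ := RS_w_exists hb hu h
    rw [Set.eq_singleton_iff_unique_mem.2 ⟨hv, fun v' hv' => RS_w_unique hb hu h hv' hv⟩]
    exact Set.ncard_singleton _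

end Assembly

end SturmAux

theorem stmt6 (b : ℕ) (hb : 1 ≤ b) (u : ℕ → Bool) (α : ℝ)
    (hu : Sturmian u) (hαirr : Irrational α) (hα : α ∈ Set.Ioo (0 : ℝ) 1)
    (hslope : HasSlope u α) :
    Sturmian (psiInf b u) ∧ HasSlope (psiInf b u) (1 / (b + α)) := by
  constructor
  · exact SturmAux.sturmian_iff_RS.2 (SturmAux.RSset_w_ncard hb hu)
  · exact SturmAux.slope_w hb hα.1 hslope
end

section
/- Let v be a factor of a Sturmian word with slope β = [0; b, a_1, a_2, a_3, …] such that v contains at least two occurrences of the letter 1. Then there exist words v', v_L, v_R with v' nonempty, v' a factor of a Sturmian word with slope α = [0; a_1, a_2, a_3, …], v_L a proper suffix of ψ_b(x) and v_R a proper prefix of ψ_b(y) for some letters x, y ∈ {0,1}, such that v = v_L · ψ_b(v') · v_R and |v|_pal ≤ 4 + |v'|_pal. -/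
namespace St8

def window {A : Type*} (f : ℕ → A) (i L : ℕ) : List A := (List.range L).map (fun k => f (i + k))

@[simp] lemma window_length {A : Type*} (f : ℕ → A) (i L : ℕ) : (window f i L).length = L := by
  simp [window]

@[simp] lemma window_zero {A : Type*} (f : ℕ → A) (i : ℕ) : window f i 0 = [] := rfl

lemma window_succ {A : Type*} (f : ℕ → A) (i L : ℕ) :
    window f i (L + 1) = window f i L ++ [f (i + L)] := by
  simp [window, List.range_succ]

lemma window_add {A : Type*} (f : ℕ → A) (i L1 L2 : ℕ) :
    window f i (L1 + L2) = window f i L1 ++ window f (i + L1) L2 := by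
  simp only [window, List.range_add, List.map_append, List.map_map]
  congr 1
  apply List.map_congr_left
  intro a _
  simp [Function.comp, Nat.add_comm, Nat.add_assoc, Nat.add_left_comm]

lemma window_one {A : Type*} (f : ℕ → A) (i : ℕ) : window f i 1 = [f i] := by
  simp [window, List.range_succ]

lemma factorOf_iff {A : Type*} (v : List A) (f : ℕ → A) :
    FactorOf v f ↔ ∃ i, v = window f i v.length := Iff.rfl

lemma factorOf_window {A : Type*} (f : ℕ → A) (i L : ℕ) : FactorOf (window f i L) f :=
  ⟨i, by rw [window_length]; rfl⟩

def Fset (f : ℕ → Bool) (n : ℕ) : Set (List Bool) := {v | v.length = n ∧ FactorOf v f}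

lemma Fset_finite (f : ℕ → Bool) (n : ℕ) : (Fset f n).Finite :=
  (List.finite_length_eq _ n).subset (fun v hv => hv.1)

lemma window_mem_Fset (f : ℕ → Bool) (i n : ℕ) : window f i n ∈ Fset f n :=
  ⟨window_length f i n, factorOf_window f i n⟩

lemma mem_Fset_iff {f : ℕ → Bool} {v : List Bool} {n : ℕ} :
    v ∈ Fset f n ↔ ∃ i, v = window f i n := by
  constructor
  · rintro ⟨hl, i, hw⟩
    exact ⟨i, by rw [hw, ← hl]; rfl⟩
  · rintro ⟨i, rfl⟩
    exact window_mem_Fset f i n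

lemma Sturmian_iff (u : ℕ → Bool) : Sturmian u ↔ ∀ n, (Fset u n).ncard = n + 1 := Iff.rfl

end St8

namespace St8

lemma take_window {A : Type*} (f : ℕ → A) (i n : ℕ) :
    (window f i (n + 1)).take n = window f i n := by
  rw [window_succ]
  exact List.take_left' (window_length f i n)

lemma window_cons {A : Type*} (f : ℕ → A) (i L : ℕ) :
    window f i (L + 1) = f i :: window f (i + 1) L := by
  have := window_add f i 1 L
  rw [Nat.add_comm 1 L] at this
  rw [this, window_one]
  rfl

lemma take_mem_Fset {f : ℕ → Bool} {n : ℕ} {v : List Bool} (h : v ∈ Fset f (n + 1)) :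
    v.take n ∈ Fset f n := by
  obtain ⟨i, rfl⟩ := mem_Fset_iff.1 h
  rw [take_window]
  exact window_mem_Fset f i n

lemma image_take_Fset (f : ℕ → Bool) (n : ℕ) :
    (fun v : List Bool => v.take n) '' Fset f (n + 1) = Fset f n := by
  apply Set.Subset.antisymm
  · rintro _ ⟨v, hv, rfl⟩
    exact take_mem_Fset hv
  · rintro w hw
    obtain ⟨i, rfl⟩ := mem_Fset_iff.1 hw
    exact ⟨window f i (n + 1), window_mem_Fset f i (n + 1), take_window f i n⟩

lemma Fset_ncard_mono (f : ℕ → Bool) (n : ℕ) :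
    (Fset f n).ncard ≤ (Fset f (n + 1)).ncard := by
  rw [← image_take_Fset f n]
  exact Set.ncard_image_le (Fset_finite f (n + 1))

lemma mem_Fset_succ_decomp {f : ℕ → Bool} {n : ℕ} {v : List Bool} (h : v ∈ Fset f (n + 1)) :
    ∃ a : Bool, v = v.take n ++ [a] := by
  obtain ⟨i, rfl⟩ := mem_Fset_iff.1 h
  exact ⟨f (i + n), by rw [take_window, window_succ]⟩

/-- Right-special word of length `n`. -/
def RSpec (f : ℕ → Bool) (n : ℕ) (w : List Bool) : Prop :=
  w.length = n ∧ FactorOf (w ++ [false]) f ∧ FactorOf (w ++ [true]) f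

lemma rspec_mem_succ {f : ℕ → Bool} {n : ℕ} {w : List Bool} (h : RSpec f n w) (a : Bool) :
    w ++ [a] ∈ Fset f (n + 1) := by
  cases a
  · exact ⟨by simp [h.1], h.2.1⟩
  · exact ⟨by simp [h.1], h.2.2⟩

lemma snoc_ne_snoc_of_ne {w1 w2 : List Bool} {a b : Bool} (h : w1 ≠ w2) :
    w1 ++ [a] ≠ w2 ++ [b] := by
  intro he
  exact h (by simpa using congrArg List.dropLast he)

lemma rspec_of_two {f : ℕ → Bool} {n : ℕ} {w : List Bool} {a1 a2 : Bool}
    (hlen : w.length = n) (ha : a1 ≠ a2)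
    (h1 : w ++ [a1] ∈ Fset f (n + 1)) (h2 : w ++ [a2] ∈ Fset f (n + 1)) : RSpec f n w := by
  cases a1 <;> cases a2
  · exact absurd rfl ha
  · exact ⟨hlen, h1.2, h2.2⟩
  · exact ⟨hlen, h2.2, h1.2⟩
  · exact absurd rfl ha

/-- In a Sturmian word there are no two distinct right-special factors of the same length. -/
lemma not_two_rspec {f : ℕ → Bool} (hf : Sturmian f) {n : ℕ} {w1 w2 : List Bool}
    (hw1 : RSpec f n w1) (hw2 : RSpec f n w2) (hne : w1 ≠ w2) : False := by
  classical
  have hS := (Sturmian_iff f).1 hf n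
  have hT := (Sturmian_iff f).1 hf (n + 1)
  set S := Fset f n with hSdef
  set T := Fset f (n + 1) with hTdef
  set g : List Bool → List Bool := fun w => w ++ [if w ++ [false] ∈ T then false else true]
    with hg
  have hmapsto : ∀ w ∈ S, g w ∈ T := by
    intro w hw
    by_cases hwf : w ++ [false] ∈ T
    · simpa [hg, hwf] using hwf
    · obtain ⟨i, rfl⟩ := mem_Fset_iff.1 hw
      have hmem : window f i n ++ [f (i + n)] ∈ T := by
        rw [← window_succ]; exact window_mem_Fset f i (n + 1)
      have : f (i + n) = true := by
        cases hfa : f (i + n)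
        · exact absurd (hfa ▸ hmem) hwf
        · rfl
      simpa [hg, hwf, ← this] using hmem
  have hinj : Set.InjOn g S := by
    intro a _ b _ he
    simpa [hg] using congrArg List.dropLast he
  set m1 : List Bool := w1 ++ [if w1 ++ [false] ∈ T then true else false] with hm1
  set m2 : List Bool := w2 ++ [if w2 ++ [false] ∈ T then true else false] with hm2
  have hm1T : m1 ∈ T := by
    rw [hm1]
    by_cases h1 : w1 ++ [false] ∈ T
    · rw [if_pos h1]; exact rspec_mem_succ hw1 _
    · rw [if_neg h1]; exact rspec_mem_succ hw1 _
  have hm2T : m2 ∈ T := by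
    rw [hm2]
    by_cases h1 : w2 ++ [false] ∈ T
    · rw [if_pos h1]; exact rspec_mem_succ hw2 _
    · rw [if_neg h1]; exact rspec_mem_succ hw2 _
  have hm1g : m1 ∉ g '' S := by
    rintro ⟨w, _, hwe⟩
    have hww : w = w1 := by simpa [hg, hm1] using congrArg List.dropLast hwe
    subst hww
    rw [hg, hm1] at hwe
    simp only at hwe
    have := (by simpa using hwe : (if w ++ [false] ∈ T then false else true)
        = (if w ++ [false] ∈ T then true else false))
    by_cases h1 : w ++ [false] ∈ T <;> simp [h1] at this
  have hm2g : m2 ∉ g '' S := by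
    rintro ⟨w, _, hwe⟩
    have hww : w = w2 := by simpa [hg, hm2] using congrArg List.dropLast hwe
    subst hww
    rw [hg, hm2] at hwe
    simp only at hwe
    have := (by simpa using hwe : (if w ++ [false] ∈ T then false else true)
        = (if w ++ [false] ∈ T then true else false))
    by_cases h1 : w ++ [false] ∈ T <;> simp [h1] at this
  have hm12 : m1 ≠ m2 := snoc_ne_snoc_of_ne hne
  have hsub : insert m1 (insert m2 (g '' S)) ⊆ T := by
    intro x hx
    rcases hx with rfl | rfl | ⟨w, hw, rfl⟩
    · exact hm1T
    · exact hm2T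
    · exact hmapsto _ hw
  have hfinT : T.Finite := Fset_finite f (n + 1)
  have hfing : (g '' S).Finite := (Fset_finite f n).image g
  have hcard : (insert m1 (insert m2 (g '' S))).ncard = (g '' S).ncard + 2 := by
    rw [Set.ncard_insert_of_notMem (by simp [hm12, hm1g]) (hfing.insert m2),
      Set.ncard_insert_of_notMem hm2g hfing]
  have hle := Set.ncard_le_ncard hsub hfinT
  rw [hcard, Set.ncard_image_of_injOn hinj, hS, hT] at hle
  omega

/-- If there is at most one right-special factor of length n, complexity grows by ≤ 1. -/
lemma Fset_ncard_succ_le {f : ℕ → Bool} {n : ℕ}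
    (hRS : ∀ w1 w2, RSpec f n w1 → RSpec f n w2 → w1 = w2) :
    (Fset f (n + 1)).ncard ≤ (Fset f n).ncard + 1 := by
  classical
  have decomp : ∀ v1 ∈ Fset f (n + 1), ∀ v2 ∈ Fset f (n + 1),
      v1.take n = v2.take n → v1 ≠ v2 → RSpec f n (v1.take n) := by
    intro v1 hv1 v2 hv2 htne hne
    obtain ⟨a1, he1⟩ := mem_Fset_succ_decomp hv1
    obtain ⟨a2, he2⟩ := mem_Fset_succ_decomp hv2
    have ha : a1 ≠ a2 := by
      intro hr; apply hne; rw [he1, he2, htne, hr]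
    have hmem1 : v1.take n ++ [a1] ∈ Fset f (n + 1) := he1 ▸ hv1
    have hmem2 : v1.take n ++ [a2] ∈ Fset f (n + 1) := by
      rw [htne, ← he2]; exact hv2
    exact rspec_of_two (by rw [List.length_take]; have := hv1.1; omega) ha hmem1 hmem2
  by_cases hex : ∃ r, RSpec f n r
  · obtain ⟨r, hr⟩ := hex
    set D : Set (List Bool) := Fset f (n + 1) \ {r ++ [true]} with hD
    have hinj : Set.InjOn (fun v : List Bool => v.take n) D := by
      intro v1 hv1 v2 hv2 he
      by_contra hne
      have htne : v1.take n = v2.take n := he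
      have hwspec := decomp v1 hv1.1 v2 hv2.1 htne hne
      obtain ⟨a1, he1⟩ := mem_Fset_succ_decomp hv1.1
      obtain ⟨a2, he2⟩ := mem_Fset_succ_decomp hv2.1
      have ha : a1 ≠ a2 := by
        intro hr2; apply hne; rw [he1, he2, htne, hr2]
      have hreq : v1.take n = r := hRS _ _ hwspec hr
      have h1 : v1 = r ++ [a1] := by rw [he1, hreq]
      have h2 : v2 = r ++ [a2] := by rw [he2, ← htne, hreq]
      have hv1n : v1 ≠ r ++ [true] := by simpa [hD] using hv1.2
      have hv2n : v2 ≠ r ++ [true] := by simpa [hD] using hv2.2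
      have ha1 : a1 = false := by
        cases a1
        · rfl
        · exact absurd h1 hv1n
      have ha2 : a2 = false := by
        cases a2
        · rfl
        · exact absurd h2 hv2n
      rw [ha1] at h1; rw [ha2] at h2
      exact hne (h1.trans h2.symm)
    have hDfin : D.Finite := (Fset_finite f (n + 1)).subset Set.diff_subset
    have himg : (fun v : List Bool => v.take n) '' D ⊆ Fset f n := by
      rintro _ ⟨v, hv, rfl⟩
      exact take_mem_Fset hv.1
    have hDle : D.ncard ≤ (Fset f n).ncard := by
      rw [← Set.ncard_image_of_injOn hinj]
      exact Set.ncard_le_ncard himg (Fset_finite f n)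
    have : (Fset f (n + 1)).ncard ≤ D.ncard + 1 := by
      have hsub : Fset f (n + 1) ⊆ insert (r ++ [true]) D := by
        intro x hx
        by_cases hxx : x = r ++ [true]
        · exact Or.inl hxx
        · exact Or.inr ⟨hx, hxx⟩
      calc (Fset f (n + 1)).ncard ≤ (insert (r ++ [true]) D).ncard :=
            Set.ncard_le_ncard hsub (hDfin.insert _)
        _ ≤ D.ncard + 1 := Set.ncard_insert_le _ _
    omega
  · push_neg at hex
    have hinj : Set.InjOn (fun v : List Bool => v.take n) (Fset f (n + 1)) := by
      intro v1 hv1 v2 hv2 he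
      by_contra hne
      exact hex _ (decomp v1 hv1 v2 hv2 he hne)
    calc (Fset f (n + 1)).ncard
        = ((fun v : List Bool => v.take n) '' Fset f (n + 1)).ncard :=
          (Set.ncard_image_of_injOn hinj).symm
      _ = (Fset f n).ncard := by rw [image_take_Fset]
      _ ≤ (Fset f n).ncard + 1 := Nat.le_succ _

end St8

namespace St8

lemma unique_ext {f : ℕ → Bool} {n : ℕ}
    (h : (Fset f (n + 1)).ncard = (Fset f n).ncard) :
    ∀ i j : ℕ, window f i n = window f j n → f (i + n) = f (j + n) := by
  intro i j hw
  have himg := image_take_Fset f n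
  have hinj : Set.InjOn (fun v : List Bool => v.take n) (Fset f (n + 1)) :=
    Set.injOn_of_ncard_image_eq (by rw [himg, h]) (Fset_finite f (n + 1))
  have h1 : window f i (n + 1) = window f j (n + 1) := by
    apply hinj (window_mem_Fset f i (n + 1)) (window_mem_Fset f j (n + 1))
    simp only [take_window]
    exact hw
  rw [window_succ, window_succ, hw] at h1
  have := List.append_cancel_left h1
  simpa using this

lemma exists_period {f : ℕ → Bool} {n : ℕ}
    (h : (Fset f (n + 1)).ncard = (Fset f n).ncard) :
    ∃ i d : ℕ, 0 < d ∧ ∀ m, i ≤ m → f (m + d) = f m := by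
  have ue := unique_ext h
  obtain ⟨x, -, y, -, hxy, hwxy⟩ :=
    Set.infinite_univ.exists_ne_map_eq_of_mapsTo
      (f := fun j : ℕ => window f j n)
      (fun j _ => window_mem_Fset f j n) (Fset_finite f n)
  -- wlog x < y
  rcases Nat.lt_or_ge x y with hlt | hge
  case _ =>
    refine ⟨x, y - x, by omega, ?_⟩
    have claim : ∀ t, window f (x + t) (n + 1) = window f (y + t) (n + 1) := by
      intro t
      induction t with
      | zero =>
        simp only [Nat.add_zero]
        rw [window_succ, window_succ, hwxy, ue x y hwxy]
      | succ t ih =>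
        have htail : window f (x + t + 1) n = window f (y + t + 1) n := by
          exact (List.cons_eq_cons.1 ((window_cons f (x + t) n).symm.trans
            (ih.trans (window_cons f (y + t) n)))).2
        have hne : f (x + t + 1 + n) = f (y + t + 1 + n) := ue _ _ htail
        rw [show x + (t + 1) = x + t + 1 by omega, show y + (t + 1) = y + t + 1 by omega,
          window_succ, window_succ, htail, hne]
    intro m hm
    have hm' : m = x + (m - x) := by omega
    have hc := claim (m - x)
    rw [window_cons, window_cons] at hc
    have hheads := (List.cons_eq_cons.1 hc).1
    rw [← hm'] at hheads
    have : y + (m - x) = m + (y - x) := by omega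
    rw [this] at hheads
    exact hheads.symm
  case _ =>
    have hlt : y < x := by omega
    refine ⟨y, x - y, by omega, ?_⟩
    have hwxy := hwxy.symm
    have claim : ∀ t, window f (y + t) (n + 1) = window f (x + t) (n + 1) := by
      intro t
      induction t with
      | zero =>
        simp only [Nat.add_zero]
        rw [window_succ, window_succ, hwxy, ue y x hwxy]
      | succ t ih =>
        have htail : window f (y + t + 1) n = window f (x + t + 1) n := by
          exact (List.cons_eq_cons.1 ((window_cons f (y + t) n).symm.trans
            (ih.trans (window_cons f (x + t) n)))).2
        have hne : f (y + t + 1 + n) = f (x + t + 1 + n) := ue _ _ htail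
        rw [show y + (t + 1) = y + t + 1 by omega, show x + (t + 1) = x + t + 1 by omega,
          window_succ, window_succ, htail, hne]
    intro m hm
    have hm' : m = y + (m - y) := by omega
    have hc := claim (m - y)
    rw [window_cons, window_cons] at hc
    have hheads := (List.cons_eq_cons.1 hc).1
    rw [← hm'] at hheads
    have : x + (m - y) = m + (x - y) := by omega
    rw [this] at hheads
    exact hheads.symm

end St8

namespace St8

lemma psiL_eq (b : ℕ) (a : Bool) :
    psiL b a = true :: List.replicate (cond a b (b - 1)) false := by
  cases a <;> rfl

lemma psiL_ne_nil (b : ℕ) (a : Bool) : psiL b a ≠ [] := by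
  rw [psiL_eq]; simp

@[simp] lemma psiW_nil (b : ℕ) : psiW b [] = [] := rfl

lemma psiW_cons (b : ℕ) (a : Bool) (w : List Bool) :
    psiW b (a :: w) = psiL b a ++ psiW b w := rfl

lemma psiW_append (b : ℕ) (w1 w2 : List Bool) :
    psiW b (w1 ++ w2) = psiW b w1 ++ psiW b w2 := by
  simp [psiW]

lemma psiW_head (b : ℕ) (w : List Bool) :
    w = [] ∨ ∃ t, psiW b w = true :: t := by
  cases w with
  | nil => exact Or.inl rfl
  | cons a w' =>
    refine Or.inr ⟨List.replicate (cond a b (b - 1)) false ++ psiW b w', ?_⟩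
    rw [psiW_cons, psiL_eq]
    rfl

lemma psiW_ne_nil (b : ℕ) {w : List Bool} (h : w ≠ []) : psiW b w ≠ [] := by
  rcases psiW_head b w with rfl | ⟨t, ht⟩
  · exact absurd rfl h
  · rw [ht]; simp

lemma psiW_inj (b : ℕ) (hb : 1 ≤ b) : ∀ {x y : List Bool}, psiW b x = psiW b y → x = y := by
  intro x
  induction x with
  | nil =>
    intro y h
    rcases psiW_head b y with rfl | ⟨t, ht⟩
    · rfl
    · rw [psiW_nil, ht] at h; exact absurd h.symm (by simp)
  | cons a x ih =>
    intro y h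
    cases y with
    | nil =>
      rw [psiW_nil] at h
      exact absurd h (by
        rw [psiW_cons]
        intro hc
        exact psiL_ne_nil b a (List.append_eq_nil_iff.1 hc).1)
    | cons c y =>
      rw [psiW_cons, psiW_cons, psiL_eq, psiL_eq] at h
      by_cases hac : a = c
      · subst hac
        simp only [List.cons_append, List.cons.injEq, true_and] at h
        rw [ih (List.append_cancel_left h)]
      · exfalso
        -- a ≠ c : one is true, the other false
        have hrep : List.replicate b false = List.replicate (b - 1) false ++ [false] := by
          rw [← List.replicate_succ']
          congr 1
          omega
        cases a <;> cases c
        · exact hac rfl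
        · -- a = false, c = true : replicate (b-1) ++ psiW x = replicate b ++ psiW y
          simp only [List.cons_append, List.cons.injEq, true_and, cond] at h
          rw [hrep, List.append_assoc] at h
          have h2 := List.append_cancel_left h
          rcases psiW_head b x with rfl | ⟨t, ht⟩
          · rw [psiW_nil] at h2; exact by simpa using h2.symm
          · rw [ht] at h2; simpa using h2
        · -- a = true, c = false
          simp only [List.cons_append, List.cons.injEq, true_and, cond] at h
          rw [hrep, List.append_assoc] at h
          have h2 := List.append_cancel_left h.symm
          rcases psiW_head b y with rfl | ⟨t, ht⟩
          · rw [psiW_nil] at h2; exact by simpa using h2.symm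
          · rw [ht] at h2; simpa using h2
        · exact hac rfl

lemma psiW_drop (b : ℕ) : ∀ (w : List Bool) (j : ℕ),
    ((psiW b w).drop j).head? = some true → ∃ k, (psiW b w).drop j = psiW b (w.drop k) := by
  intro w
  induction w with
  | nil => intro j h; simp at h
  | cons a w' ih =>
    intro j h
    rw [psiW_cons] at h ⊢
    set B := (psiL b a).length with hB
    rcases Nat.lt_or_ge j B with hj | hj
    · rcases Nat.eq_zero_or_pos j with rfl | hjpos
      · exact ⟨0, by simp [psiW_cons]⟩
      · exfalso
        rw [List.drop_append_of_le_length (by omega)] at h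
        have hd : (psiL b a).drop j = List.replicate ((cond a b (b - 1)) + 1 - j) false := by
          rw [psiL_eq]
          cases j with
          | zero => omega
          | succ jj =>
            rw [List.drop_succ_cons, List.drop_replicate]
            congr 1
            have : B = (cond a b (b - 1)) + 1 := by rw [hB, psiL_eq]; simp
            omega
        rw [List.head?_append, hd] at h
        have hnz : (cond a b (b - 1)) + 1 - j ≠ 0 := by
          have : B = (cond a b (b - 1)) + 1 := by rw [hB, psiL_eq]; simp
          omega
        rcases Nat.exists_eq_succ_of_ne_zero hnz with ⟨mm, hmm⟩
        rw [hmm] at h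
        simp [List.replicate_succ] at h
    · rw [List.drop_append, List.drop_eq_nil_of_le (by omega),
        List.nil_append] at h ⊢
      obtain ⟨k, hk⟩ := ih (j - B) h
      refine ⟨k + 1, ?_⟩
      rw [hk, List.drop_succ_cons]
  
lemma psiW_suffix (b : ℕ) {s : List Bool} {w : List Bool}
    (hs : s <:+ psiW b w) (hh : s.head? = some true) :
    ∃ w2, w2 <:+ w ∧ s = psiW b w2 := by
  obtain ⟨t, ht⟩ := hs
  have hdrop : s = (psiW b w).drop t.length := by
    rw [← ht]; simp
  obtain ⟨k, hk⟩ := psiW_drop b w t.length (by rw [← hdrop]; exact hh)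
  exact ⟨w.drop k, List.drop_suffix k w, by rw [hdrop, hk]⟩

end St8

namespace St8

def tpsi (b : ℕ) (w : List Bool) : List Bool := w.flatMap (fun a => (psiL b a).reverse)

lemma psiW_snoc_true (b : ℕ) (w : List Bool) :
    psiW b w ++ [true] = true :: tpsi b w := by
  induction w with
  | nil => rfl
  | cons a w ih =>
    rw [psiW_cons, List.append_assoc, ih]
    show psiL b a ++ (true :: tpsi b w) = true :: ((psiL b a).reverse ++ tpsi b w)
    rw [psiL_eq]
    simp [List.reverse_cons, List.replicate, List.append_assoc]

lemma tpsi_reverse (b : ℕ) (w : List Bool) :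
    (tpsi b w).reverse = psiW b w.reverse := by
  rw [tpsi, List.reverse_flatMap]
  simp [psiW, Function.comp_def]

lemma psi_pal {b : ℕ} {p : List Bool} (hp : IsPal p) (hne : p ≠ []) :
    ∃ q, IsPal q ∧ psiW b p = true :: q := by
  obtain hnil | ⟨t, ht⟩ := psiW_head b p
  · exact absurd hnil hne
  · refine ⟨t, ?_, ht⟩
    have h1 : (tpsi b p).reverse = true :: t := by
      rw [tpsi_reverse, hp, ht]
    have h2 : tpsi b p = t.reverse ++ [true] := by
      have := congrArg List.reverse h1
      simpa using this
    have h3 := psiW_snoc_true b p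
    rw [ht, h2] at h3
    have h4 : t ++ [true] = t.reverse ++ [true] := by
      simpa using h3
    have h5 : t = t.reverse := by
      have := List.append_inj_left' h4 rfl
      exact this
    exact h5.symm

lemma pal_sandwich {q : List Bool} (hq : IsPal q) : IsPal (true :: (q ++ [true])) := by
  unfold IsPal at hq ⊢
  rw [List.reverse_cons, List.reverse_append, hq]
  simp

lemma psi_pal_decomp (b : ℕ) : ∀ (l : List (List Bool)),
    (∀ p ∈ l, IsPal p ∧ p ≠ []) →
    ∃ l2 : List (List Bool), (∀ q ∈ l2, IsPal q) ∧
      l2.flatten = psiW b l.flatten ∧ l2.length ≤ l.length + 1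
  | [] => fun _ => ⟨[], by simp, by simp, by simp⟩
  | [p] => fun h => by
      obtain ⟨q, hq, hpq⟩ := psi_pal (b := b) (h p (by simp)).1 (h p (by simp)).2
      refine ⟨[[true], q], ?_, ?_, by simp⟩
      · intro x hx
        simp only [List.mem_cons, List.mem_singleton, List.not_mem_nil, or_false] at hx
        rcases hx with rfl | rfl
        · rfl
        · exact hq
      · show [true] ++ (q ++ []) = psiW b ([p].flatten)
        rw [List.append_nil]
        simp only [List.flatten_cons, List.flatten_nil, List.append_nil]
        rw [hpq]
        rfl
  | p1 :: p2 :: rest => fun h => by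
      obtain ⟨l2r, hl2r, hfl, hlen⟩ := psi_pal_decomp b rest
        (fun p hp => h p (by simp [hp]))
      obtain ⟨q1, hq1, hpq1⟩ := psi_pal (b := b) (h p1 (by simp)).1 (h p1 (by simp)).2
      obtain ⟨q2, hq2, hpq2⟩ := psi_pal (b := b) (h p2 (by simp)).1 (h p2 (by simp)).2
      refine ⟨(true :: (q1 ++ [true])) :: q2 :: l2r, ?_, ?_, ?_⟩
      · intro x hx
        simp only [List.mem_cons] at hx
        rcases hx with rfl | rfl | h'
        · exact pal_sandwich hq1
        · exact hq2
        · exact hl2r x h'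
      · rw [List.flatten_cons, List.flatten_cons, hfl, List.flatten_cons, List.flatten_cons,
          psiW_append, psiW_append, hpq1, hpq2]
        simp
      · simp only [List.length_cons]
        omega

lemma palLen_le {A : Type*} (w : List A) (l : List (List A))
    (hl : ∀ p ∈ l, IsPal p) (hf : l.flatten = w) : palLen w ≤ l.length :=
  Nat.sInf_le ⟨l, rfl, hl, hf⟩

lemma flatten_singletons {A : Type*} (w : List A) : (w.map (fun a => [a])).flatten = w := by
  induction w with
  | nil => rfl
  | cons a w ih => simp [ih]

lemma palLen_exists {A : Type*} (w : List A) :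
    ∃ l : List (List A), l.length = palLen w ∧ (∀ p ∈ l, IsPal p) ∧ l.flatten = w := by
  have hne : {k | ∃ l : List (List A), l.length = k ∧ (∀ p ∈ l, IsPal p) ∧ l.flatten = w}.Nonempty := by
    refine ⟨w.length, w.map (fun a => [a]), by simp, ?_, flatten_singletons w⟩
    intro p hp
    obtain ⟨a, _, rfl⟩ := List.mem_map.1 hp
    rfl
  exact Nat.sInf_mem hne

lemma flatten_filter_nonempty {A : Type*} (l : List (List A)) :
    (l.filter (fun p => !(p.isEmpty))).flatten = l.flatten := by
  induction l with
  | nil => rfl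
  | cons p l ih =>
    by_cases hp : p.isEmpty
    · rw [List.filter_cons_of_neg (by simp [hp]), List.flatten_cons, ih,
        List.isEmpty_iff.1 hp, List.nil_append]
    · rw [List.filter_cons_of_pos (by simp [hp]), List.flatten_cons, ih]
      rfl

lemma isPal_replicate {A : Type*} (n : ℕ) (a : A) : IsPal (List.replicate n a) := by
  unfold IsPal
  exact List.reverse_replicate

lemma palLen_main_bound (b : ℕ) {v v' : List Bool} {s : ℕ} (vR : List Bool)
    (rl : List (List Bool)) (hrl : ∀ p ∈ rl, IsPal p) (hrf : rl.flatten = vR)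
    (hrlen : rl.length ≤ 2) (hv' : v' ≠ [])
    (hv : v = List.replicate s false ++ psiW b v' ++ vR) :
    palLen v ≤ 4 + palLen v' := by
  classical
  obtain ⟨l, hllen, hlpal, hlf⟩ := palLen_exists v'
  set lf := l.filter (fun p => !(p.isEmpty)) with hlfdef
  have hlf_flat : lf.flatten = v' := by
    rw [hlfdef, flatten_filter_nonempty, hlf]
  have hlf_prop : ∀ p ∈ lf, IsPal p ∧ p ≠ [] := by
    intro p hp
    have h1 := List.mem_of_mem_filter hp
    have h2 := List.of_mem_filter hp
    refine ⟨hlpal p h1, ?_⟩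
    simpa [List.isEmpty_iff] using h2
  obtain ⟨l2, hl2pal, hl2flat, hl2len⟩ := psi_pal_decomp b lf hlf_prop
  have hlf_len : lf.length ≤ l.length := List.length_filter_le _ _
  refine le_trans (palLen_le v (List.replicate s false :: (l2 ++ rl)) ?_ ?_) ?_
  · intro p hp
    simp only [List.mem_cons] at hp
    rcases hp with rfl | hp
    · exact isPal_replicate s false
    · rcases List.mem_append.1 hp with h' | h'
      · exact hl2pal p h'
      · exact hrl p h'
  · rw [List.flatten_cons, List.flatten_append, hl2flat, hlf_flat, hrf, hv,
      List.append_assoc]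
  · simp only [List.length_cons, List.length_append]
    omega

end St8

namespace St8

open Filter

def Ptrue (f : ℕ → Bool) : ℕ → Prop := fun k => f k = true

instance (f : ℕ → Bool) : DecidablePred (Ptrue f) := fun k =>
  inferInstanceAs (Decidable (f k = true))

lemma window_zero_start (f : ℕ → Bool) (n : ℕ) :
    window f 0 n = (List.range n).map f := by
  unfold window
  apply List.map_congr_left
  intro a _
  rw [Nat.zero_add]

lemma count_range_map (f : ℕ → Bool) (n : ℕ) :
    ((List.range n).map f).count true = Nat.count (Ptrue f) n := by
  induction n with
  | zero => rfl
  | succ n ih =>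
    rw [List.range_succ, List.map_append, List.count_append, Nat.count_succ, ih]
    cases hf : f n
    · simp [Ptrue, hf]
    · simp [Ptrue, hf]

lemma hasSlope_count {f : ℕ → Bool} {β : ℝ} (hs : HasSlope f β) :
    Tendsto (fun n => (Nat.count (Ptrue f) n : ℝ) / n) atTop (nhds β) := by
  have h : (fun n => (Nat.count (Ptrue f) n : ℝ) / n)
      = fun n => (((List.range n).map f).count true : ℝ) / n := by
    funext n
    rw [count_range_map]
  rw [h]
  exact hs

lemma infinite_of_slope_pos {f : ℕ → Bool} {β : ℝ} (hs : HasSlope f β) (hβ : 0 < β) :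
    (setOf (Ptrue f)).Infinite := by
  by_contra hninf
  rw [Set.not_infinite] at hninf
  have hfin := hninf
  obtain ⟨N, hN⟩ := hfin.bddAbove
  have hstop : ∀ m, N + 1 ≤ m → ¬ Ptrue f m := by
    intro m hm hPm
    have := hN hPm
    omega
  have hconst : ∀ n, N + 1 ≤ n → Nat.count (Ptrue f) n = Nat.count (Ptrue f) (N + 1) := by
    intro n hn
    induction n, hn using Nat.le_induction with
    | base => rfl
    | succ n hn ih =>
      rw [Nat.count_succ, if_neg (hstop n hn), ih, Nat.add_zero]
  have hzero : Tendsto (fun n => (Nat.count (Ptrue f) n : ℝ) / n) atTop (nhds 0) := by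
    apply Tendsto.congr' ?_ (tendsto_const_div_atTop_nhds_zero_nat
      (Nat.count (Ptrue f) (N + 1) : ℝ))
    filter_upwards [eventually_ge_atTop (N + 1)] with n hn
    rw [hconst n hn]
  have hβ0 := tendsto_nhds_unique (hasSlope_count hs) hzero
  rw [hβ0] at hβ
  exact lt_irrefl 0 hβ
  
end St8

namespace St8

open Filter

lemma exists_spacing_le {f : ℕ → Bool} {β : ℝ} (hs : HasSlope f β)
    (hinf : (setOf (Ptrue f)).Infinite) (b : ℕ) (hβ : 1 / ((b : ℝ) + 1) < β) :
    ∃ k, Nat.nth (Ptrue f) (k + 1) ≤ Nat.nth (Ptrue f) k + b := by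
  by_contra hcon
  push_neg at hcon
  set p := Ptrue f with hp
  have hgrow : ∀ k, k * (b + 1) ≤ Nat.nth p k := by
    intro k
    induction k with
    | zero => simp
    | succ k ih =>
      have := hcon k
      calc (k + 1) * (b + 1) = k * (b + 1) + (b + 1) := by ring
        _ ≤ Nat.nth p k + (b + 1) := by omega
        _ ≤ Nat.nth p (k + 1) := by omega
  have hineq : ∀ n : ℕ, 1 ≤ n →
      (Nat.count p n : ℝ) / n ≤ 1 / ((b : ℝ) + 1) + 1 / n := by
    intro n hn
    set c := Nat.count p n with hc
    have hcount : (c : ℝ) ≤ (n : ℝ) / ((b : ℝ) + 1) + 1 := by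
      rcases Nat.eq_zero_or_pos c with h0 | hpos
      · rw [h0]
        have : (0 : ℝ) ≤ (n : ℝ) / ((b : ℝ) + 1) := by positivity
        push_cast
        linarith
      · have hlt : Nat.nth p (c - 1) < n := by
          rw [← Nat.lt_nth_iff_count_lt hinf]
          omega
        have h2 : (c - 1) * (b + 1) < n := lt_of_le_of_lt (hgrow (c - 1)) hlt
        have h3 : ((c : ℝ) - 1) * ((b : ℝ) + 1) < n := by
          have : ((c - 1 : ℕ) : ℝ) * (((b : ℕ) : ℝ) + 1) < (n : ℝ) := by
            push_cast
            exact_mod_cast h2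
          rw [Nat.cast_sub hpos] at this
          push_cast at this ⊢
          linarith
        have hb1 : (0 : ℝ) < (b : ℝ) + 1 := by positivity
        rw [← sub_le_iff_le_add]
        calc (c : ℝ) - 1 = ((c : ℝ) - 1) * ((b : ℝ) + 1) / ((b : ℝ) + 1) := by
              rw [mul_div_cancel_right₀]
              positivity
          _ ≤ (n : ℝ) / ((b : ℝ) + 1) := by gcongr
    have hnpos : (0 : ℝ) < n := by exact_mod_cast hn
    calc (c : ℝ) / n ≤ ((n : ℝ) / ((b : ℝ) + 1) + 1) / n := by gcongr
      _ = 1 / ((b : ℝ) + 1) + 1 / n := by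
          field_simp
  have hlim2 : Tendsto (fun n : ℕ => 1 / ((b : ℝ) + 1) + 1 / n) atTop
      (nhds (1 / ((b : ℝ) + 1))) := by
    have h1 : Tendsto (fun n : ℕ => 1 / (n : ℝ)) atTop (nhds 0) :=
      tendsto_const_div_atTop_nhds_zero_nat 1
    have := (tendsto_const_nhds (x := 1 / ((b : ℝ) + 1)) (f := atTop (α := ℕ))).add h1
    simpa using this
  have hle : β ≤ 1 / ((b : ℝ) + 1) := by
    apply le_of_tendsto_of_tendsto (hasSlope_count hs) hlim2
    filter_upwards [eventually_ge_atTop 1] with n hn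
    exact hineq n hn
  linarith

lemma exists_spacing_ge {f : ℕ → Bool} {β : ℝ} (hs : HasSlope f β)
    (hinf : (setOf (Ptrue f)).Infinite) (b : ℕ) (hb : 1 ≤ b) (hβ : β < 1 / (b : ℝ)) :
    ∃ k, Nat.nth (Ptrue f) k + (b + 1) ≤ Nat.nth (Ptrue f) (k + 1) := by
  by_contra hcon
  push_neg at hcon
  set p := Ptrue f with hp
  set A := Nat.nth p 0 with hA
  have hgrow : ∀ k, Nat.nth p k ≤ A + k * b := by
    intro k
    induction k with
    | zero => simp [hA]
    | succ k ih =>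
      have h1 := hcon k
      have : (k + 1) * b = k * b + b := by ring
      omega
  have hineq : ∀ n : ℕ, 1 ≤ n →
      1 / (b : ℝ) - (A : ℝ) / ((b : ℝ) * n) ≤ (Nat.count p n : ℝ) / n := by
    intro n hn
    set c := Nat.count p n with hc
    have h1 : n ≤ Nat.nth p c := Nat.le_nth_count hinf n
    have h2 : n ≤ A + c * b := le_trans h1 (hgrow c)
    have hbpos : (0 : ℝ) < (b : ℝ) := by exact_mod_cast hb
    have hnpos : (0 : ℝ) < n := by exact_mod_cast hn
    have h3 : ((n : ℝ) - A) / (b : ℝ) ≤ (c : ℝ) := by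
      rw [div_le_iff₀ hbpos]
      have : (n : ℝ) ≤ (A : ℝ) + (c : ℝ) * b := by exact_mod_cast h2
      linarith
    calc 1 / (b : ℝ) - (A : ℝ) / ((b : ℝ) * n) = (((n : ℝ) - A) / (b : ℝ)) / n := by
          field_simp
      _ ≤ (c : ℝ) / n := by gcongr
  have hlim2 : Tendsto (fun n : ℕ => 1 / (b : ℝ) - (A : ℝ) / ((b : ℝ) * n)) atTop
      (nhds (1 / (b : ℝ))) := by
    have hbpos : (0 : ℝ) < (b : ℝ) := by exact_mod_cast hb
    have h1 : Tendsto (fun n : ℕ => (A : ℝ) / ((b : ℝ) * n)) atTop (nhds 0) := by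
      have h2 : (fun n : ℕ => (A : ℝ) / ((b : ℝ) * n)) = fun n : ℕ => ((A : ℝ) / b) / n := by
        funext n
        rw [div_div]
      rw [h2]
      exact tendsto_const_div_atTop_nhds_zero_nat _
    have := (tendsto_const_nhds (x := 1 / (b : ℝ)) (f := atTop (α := ℕ))).sub h1
    simpa using this
  have hge : 1 / (b : ℝ) ≤ β := by
    apply le_of_tendsto_of_tendsto hlim2 (hasSlope_count hs)
    filter_upwards [eventually_ge_atTop 1] with n hn
    exact hineq n hn
  linarith

end St8

namespace St8

open Filter

lemma periodic_shift {f : ℕ → Bool} {i d : ℕ}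
    (hper : ∀ m, i ≤ m → f (m + d) = f m) :
    ∀ (N m : ℕ), i ≤ m → f (m + N * d) = f m := by
  intro N
  induction N with
  | zero => intro m _; rw [Nat.zero_mul, Nat.add_zero]
  | succ N ih =>
    intro m hm
    have : m + (N + 1) * d = (m + N * d) + d := by ring
    rw [this, hper (m + N * d) (by omega), ih m hm]

lemma periodic_rational {f : ℕ → Bool} {i d : ℕ} (hd : 0 < d)
    (hper : ∀ m, i ≤ m → f (m + d) = f m) {β : ℝ} (hs : HasSlope f β) :
    ∃ q : ℚ, (q : ℝ) = β := by
  set c := (window f i d).count true with hc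
  set A := (window f 0 i).count true with hA
  have hblock : ∀ N, window f (i + N * d) d = window f i d := by
    intro N
    unfold window
    apply List.map_congr_left
    intro a _
    rw [show i + N * d + a = (i + a) + N * d by ring]
    exact periodic_shift hper N (i + a) (by omega)
  have hcnt : ∀ N, (window f i (N * d)).count true = N * c := by
    intro N
    induction N with
    | zero => simp
    | succ N ih =>
      rw [show (N + 1) * d = N * d + d by ring, window_add, List.count_append, ih, hblock N]
      ring
  have hfull : ∀ N, (window f 0 (i + N * d)).count true = A + N * c := by
    intro N
    rw [window_add, List.count_append, ← hA, Nat.zero_add, hcnt N]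
  have hmono : Tendsto (fun N : ℕ => i + N * d) atTop atTop := by
    apply tendsto_atTop_atTop_of_monotone
    · intro x y hxy
      show i + x * d ≤ i + y * d
      have : x * d ≤ y * d := Nat.mul_le_mul_right d hxy
      omega
    · intro x
      refine ⟨x, ?_⟩
      show x ≤ i + x * d
      calc x = x * 1 := (Nat.mul_one x).symm
        _ ≤ x * d := Nat.mul_le_mul_left x hd
        _ ≤ i + x * d := Nat.le_add_left _ _
  have hsub : Tendsto (fun N : ℕ => (((List.range (i + N * d)).map f).count true : ℝ)
      / ((i + N * d : ℕ) : ℝ)) atTop (nhds β) := hs.comp hmono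
  have heq : ∀ N : ℕ, (((List.range (i + N * d)).map f).count true : ℝ) / (↑(i + N * d))
      = ((A : ℝ) + N * c) / ((i : ℝ) + N * d) := by
    intro N
    rw [← window_zero_start, hfull N]
    push_cast
    ring_nf
  have hsub2 : Tendsto (fun N : ℕ => ((A : ℝ) + N * c) / ((i : ℝ) + N * d)) atTop (nhds β) := by
    apply Tendsto.congr ?_ hsub
    intro N
    rw [← heq N]
  have hlim : Tendsto (fun N : ℕ => ((A : ℝ) + N * c) / ((i : ℝ) + N * d)) atTop
      (nhds ((c : ℝ) / d)) := by
    have hdpos : (0 : ℝ) < d := by exact_mod_cast hd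
    have h1 : Tendsto (fun N : ℕ => ((A : ℝ) / N + c) / ((i : ℝ) / N + d)) atTop
        (nhds ((0 + c) / (0 + d))) := by
      apply Tendsto.div
      · exact (tendsto_const_div_atTop_nhds_zero_nat _).add tendsto_const_nhds
      · exact (tendsto_const_div_atTop_nhds_zero_nat _).add tendsto_const_nhds
      · positivity
    rw [zero_add, zero_add] at h1
    apply Tendsto.congr' ?_ h1
    filter_upwards [eventually_ge_atTop 1] with N hN
    have hNpos : (0 : ℝ) < N := by exact_mod_cast hN
    field_simp
  have hfin := tendsto_nhds_unique hsub2 hlim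
  exact ⟨(c : ℚ) / (d : ℚ), by push_cast; rw [hfin]⟩

end St8

namespace St8

lemma window_false (f : ℕ → Bool) (i L : ℕ)
    (h : ∀ j, i ≤ j → j < i + L → f j = false) :
    window f i L = List.replicate L false := by
  induction L with
  | zero => rfl
  | succ L ih =>
    rw [window_succ, ih (fun j hj1 hj2 => h j hj1 (by omega)),
      h (i + L) (by omega) (by omega), List.replicate_succ']

lemma false_between {f : ℕ → Bool} (hinf : (setOf (Ptrue f)).Infinite) {k j : ℕ}
    (h1 : Nat.nth (Ptrue f) k < j) (h2 : j < Nat.nth (Ptrue f) (k + 1)) : f j = false := by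
  by_contra hc
  have hPj : Ptrue f j := by
    unfold Ptrue
    cases hfj : f j
    · exact absurd hfj hc
    · rfl
  have hj : Nat.nth (Ptrue f) (Nat.count (Ptrue f) j) = j := Nat.nth_count hPj
  have hmk : k < Nat.count (Ptrue f) j := by
    rw [← Nat.nth_lt_nth hinf, hj]
    exact h1
  have hmk2 : Nat.count (Ptrue f) j < k + 1 := by
    rw [← Nat.nth_lt_nth hinf, hj]
    exact h2
  omega

lemma false_before {f : ℕ → Bool} (hinf : (setOf (Ptrue f)).Infinite) {j : ℕ}
    (h : j < Nat.nth (Ptrue f) 0) : f j = false := by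
  by_contra hc
  have hPj : Ptrue f j := by
    unfold Ptrue
    cases hfj : f j
    · exact absurd hfj hc
    · rfl
  have hj : Nat.nth (Ptrue f) (Nat.count (Ptrue f) j) = j := Nat.nth_count hPj
  have : Nat.count (Ptrue f) j < 0 := by
    rw [← Nat.nth_lt_nth hinf, hj]
    exact h
  omega

lemma nth_true {f : ℕ → Bool} (hinf : (setOf (Ptrue f)).Infinite) (k : ℕ) :
    f (Nat.nth (Ptrue f) k) = true :=
  Nat.nth_mem_of_infinite hinf k

/-- The key two-right-special contradiction. -/
lemma rs2 {u : ℕ → Bool} (hu : Sturmian u) {g : ℕ}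
    (h1 : FactorOf (true :: (List.replicate g false ++ [true])) u)
    (h2 : FactorOf (true :: List.replicate (g + 1) false) u)
    (h3 : FactorOf (List.replicate (g + 1) false ++ [true]) u)
    (h4 : FactorOf (List.replicate (g + 2) false) u) : False := by
  set w1 : List Bool := true :: List.replicate g false with hw1
  set w2 : List Bool := List.replicate (g + 1) false with hw2
  have hlen1 : w1.length = g + 1 := by simp [hw1]
  have hlen2 : w2.length = g + 1 := by simp [hw2]
  have hne : w1 ≠ w2 := by
    intro h
    have := congrArg (fun l => l.head?) h
    simp [hw1, hw2, List.replicate_succ] at this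
  have hr1 : RSpec u (g + 1) w1 := by
    refine ⟨hlen1, ?_, ?_⟩
    · have : w1 ++ [false] = true :: List.replicate (g + 1) false := by
        rw [hw1, List.replicate_succ']
        rfl
      rw [this]
      exact h2
    · have : w1 ++ [true] = true :: (List.replicate g false ++ [true]) := by
        rw [hw1]
        rfl
      rw [this]
      exact h1
  have hr2 : RSpec u (g + 1) w2 := by
    refine ⟨hlen2, ?_, ?_⟩
    · have : w2 ++ [false] = List.replicate (g + 2) false := by
        rw [hw2, ← List.replicate_succ']
      rw [this]
      exact h4
    · exact h3
  exact not_two_rspec hu hr1 hr2 hne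

end St8

namespace St8

section blocks

variable {u : ℕ → Bool} (hinf : (setOf (Ptrue u)).Infinite)

include hinf

lemma nth_spacing_pos (k : ℕ) : Nat.nth (Ptrue u) k < Nat.nth (Ptrue u) (k + 1) :=
  (Nat.nth_lt_nth hinf).2 (by omega)

/-- zeros strictly inside a gap -/
lemma window_gap_false {k m : ℕ} (hm : Nat.nth (Ptrue u) k + m < Nat.nth (Ptrue u) (k + 1)) :
    window u (Nat.nth (Ptrue u) k + 1) m = List.replicate m false := by
  apply window_false
  intro j hj1 hj2
  exact false_between hinf (k := k) (by omega) (by omega)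

lemma window_head_block {k m : ℕ} (hm : Nat.nth (Ptrue u) k + m < Nat.nth (Ptrue u) (k + 1)) :
    window u (Nat.nth (Ptrue u) k) (m + 1) = true :: List.replicate m false := by
  rw [show m + 1 = 1 + m by omega, window_add, window_one, nth_true hinf k,
    window_gap_false hinf hm]
  rfl

lemma window_full_block {k s : ℕ}
    (hs : Nat.nth (Ptrue u) (k + 1) = Nat.nth (Ptrue u) k + s + 1) :
    window u (Nat.nth (Ptrue u) k) (s + 2) =
      true :: (List.replicate s false ++ [true]) := by
  rw [show s + 2 = (s + 1) + 1 by omega, window_succ,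
    window_head_block hinf (by omega), show Nat.nth (Ptrue u) k + (s + 1)
      = Nat.nth (Ptrue u) (k + 1) by omega, nth_true hinf (k + 1)]
  rfl

lemma window_tail_block {k m : ℕ} (hm : Nat.nth (Ptrue u) k + m < Nat.nth (Ptrue u) (k + 1)) :
    window u (Nat.nth (Ptrue u) (k + 1) - m) (m + 1) =
      List.replicate m false ++ [true] := by
  have hkk := nth_spacing_pos hinf k
  rw [window_succ, window_false u (Nat.nth (Ptrue u) (k + 1) - m) m
      (fun j hj1 hj2 => false_between hinf (k := k) (by omega) (by omega)),
    show Nat.nth (Ptrue u) (k + 1) - m + m = Nat.nth (Ptrue u) (k + 1) by omega,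
    nth_true hinf (k + 1)]

lemma window_before_first {m : ℕ} (hm : m ≤ Nat.nth (Ptrue u) 0) :
    window u (Nat.nth (Ptrue u) 0 - m) (m + 1) = List.replicate m false ++ [true] := by
  rw [window_succ, window_false u (Nat.nth (Ptrue u) 0 - m) m
      (fun j hj1 hj2 => false_before hinf (by omega)),
    show Nat.nth (Ptrue u) 0 - m + m = Nat.nth (Ptrue u) 0 by omega,
    nth_true hinf 0]

lemma window_prefix_zeros {m : ℕ} (hm : m ≤ Nat.nth (Ptrue u) 0) :
    window u 0 m = List.replicate m false := by
  apply window_false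
  intro j hj1 hj2
  exact false_before hinf (by omega)

end blocks

/-- Structure lemma: all spacings of 1s in `u` are `b` or `b+1` and the first 1 is ≤ b. -/
lemma spacing_structure {b : ℕ} (hb : 1 ≤ b) {α : ℝ} (hα : α ∈ Set.Ioo (0 : ℝ) 1)
    {u : ℕ → Bool} (hu : Sturmian u) (hslope : HasSlope u (1 / ((b : ℝ) + α))) :
    (setOf (Ptrue u)).Infinite ∧
    (∀ k, Nat.nth (Ptrue u) (k + 1) = Nat.nth (Ptrue u) k + b ∨
      Nat.nth (Ptrue u) (k + 1) = Nat.nth (Ptrue u) k + (b + 1)) ∧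
    Nat.nth (Ptrue u) 0 ≤ b := by
  obtain ⟨hα0, hα1⟩ := hα
  have hbR : (1 : ℝ) ≤ (b : ℝ) := by exact_mod_cast hb
  have hden : (0 : ℝ) < (b : ℝ) + α := by linarith
  have hβ0 : (0 : ℝ) < 1 / ((b : ℝ) + α) := by positivity
  have hinf := infinite_of_slope_pos hslope hβ0
  have hβub : 1 / ((b : ℝ) + 1) < 1 / ((b : ℝ) + α) := by
    apply one_div_lt_one_div_of_lt hden
    linarith
  have hβlb : 1 / ((b : ℝ) + α) < 1 / (b : ℝ) := by
    apply one_div_lt_one_div_of_lt (by linarith)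
    linarith
  obtain ⟨k0, hk0⟩ := exists_spacing_le hslope hinf b hβub
  obtain ⟨k1, hk1⟩ := exists_spacing_ge hslope hinf b hb hβlb
  have hmono : ∀ k, Nat.nth (Ptrue u) k < Nat.nth (Ptrue u) (k + 1) :=
    fun k => nth_spacing_pos hinf k
  have hub : ∀ K, Nat.nth (Ptrue u) (K + 1) ≤ Nat.nth (Ptrue u) K + (b + 1) := by
    intro K
    by_contra hcon
    push_neg at hcon
    set g := Nat.nth (Ptrue u) (k0 + 1) - Nat.nth (Ptrue u) k0 - 1 with hg
    have hm0 := hmono k0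
    have hmK := hmono K
    have hgb : g + 1 ≤ b := by omega
    have F1 : FactorOf (true :: (List.replicate g false ++ [true])) u := by
      have := window_full_block hinf (k := k0) (s := g) (by omega)
      rw [← this]
      exact factorOf_window u _ _
    have F2 : FactorOf (true :: List.replicate (g + 1) false) u := by
      have := window_head_block hinf (k := K) (m := g + 1) (by omega)
      rw [← this]
      exact factorOf_window u _ _
    have F3 : FactorOf (List.replicate (g + 1) false ++ [true]) u := by
      have := window_tail_block hinf (k := K) (m := g + 1) (by omega)
      rw [← this]
      exact factorOf_window u _ _
    have F4 : FactorOf (List.replicate (g + 2) false) u := by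
      have := window_gap_false hinf (k := K) (m := g + 2) (by omega)
      rw [← this]
      exact factorOf_window u _ _
    exact rs2 hu F1 F2 F3 F4
  have hlb : ∀ K, Nat.nth (Ptrue u) K + b ≤ Nat.nth (Ptrue u) (K + 1) := by
    intro K
    by_contra hcon
    push_neg at hcon
    set g := Nat.nth (Ptrue u) (K + 1) - Nat.nth (Ptrue u) K - 1 with hg
    have hmK := hmono K
    have hm1 := hmono k1
    have hgb : g + 2 ≤ b := by omega
    have F1 : FactorOf (true :: (List.replicate g false ++ [true])) u := by
      have := window_full_block hinf (k := K) (s := g) (by omega)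
      rw [← this]
      exact factorOf_window u _ _
    have F2 : FactorOf (true :: List.replicate (g + 1) false) u := by
      have := window_head_block hinf (k := k1) (m := g + 1) (by omega)
      rw [← this]
      exact factorOf_window u _ _
    have F3 : FactorOf (List.replicate (g + 1) false ++ [true]) u := by
      have := window_tail_block hinf (k := k1) (m := g + 1) (by omega)
      rw [← this]
      exact factorOf_window u _ _
    have F4 : FactorOf (List.replicate (g + 2) false) u := by
      have := window_gap_false hinf (k := k1) (m := g + 2) (by omega)
      rw [← this]
      exact factorOf_window u _ _
    exact rs2 hu F1 F2 F3 F4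
  refine ⟨hinf, fun k => by have h1 := hub k; have h2 := hlb k; omega, ?_⟩
  by_contra hcon
  push_neg at hcon
  have hm0 := hmono k0
  have hm1 := hmono k1
  have hsp0 : Nat.nth (Ptrue u) (k0 + 1) = Nat.nth (Ptrue u) k0 + b := by
    have := hlb k0
    omega
  have hsp1 : Nat.nth (Ptrue u) (k1 + 1) = Nat.nth (Ptrue u) k1 + (b + 1) := by
    have := hub k1
    omega
  have F1 : FactorOf (true :: (List.replicate (b - 1) false ++ [true])) u := by
    have := window_full_block hinf (k := k0) (s := b - 1) (by omega)
    rw [← this]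
    exact factorOf_window u _ _
  have F2 : FactorOf (true :: List.replicate (b - 1 + 1) false) u := by
    have := window_head_block hinf (k := k1) (m := b - 1 + 1) (by omega)
    rw [← this]
    exact factorOf_window u _ _
  have F3 : FactorOf (List.replicate (b - 1 + 1) false ++ [true]) u := by
    have := window_before_first hinf (m := b - 1 + 1) (by omega)
    rw [← this]
    exact factorOf_window u _ _
  have F4 : FactorOf (List.replicate (b - 1 + 2) false) u := by
    have := window_prefix_zeros hinf (m := b - 1 + 2) (by omega)
    rw [← this]
    exact factorOf_window u _ _
  exact rs2 hu F1 F2 F3 F4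

end St8

namespace St8

open Filter

noncomputable def deriv (b : ℕ) (u : ℕ → Bool) : ℕ → Bool :=
  fun k => decide (Nat.nth (Ptrue u) (k + 1) = Nat.nth (Ptrue u) k + (b + 1))

section derivsec

variable {b : ℕ} {u : ℕ → Bool} (hinf : (setOf (Ptrue u)).Infinite)
  (hsp : ∀ k, Nat.nth (Ptrue u) (k + 1) = Nat.nth (Ptrue u) k + b ∨
      Nat.nth (Ptrue u) (k + 1) = Nat.nth (Ptrue u) k + (b + 1))
  (hb : 1 ≤ b)

include hsp in
lemma deriv_spacing (k : ℕ) :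
    Nat.nth (Ptrue u) (k + 1) = Nat.nth (Ptrue u) k + b + (cond (deriv b u k) 1 0) := by
  by_cases h : Nat.nth (Ptrue u) (k + 1) = Nat.nth (Ptrue u) k + (b + 1)
  · have hd : deriv b u k = true := by simp [deriv, h]
    rw [hd, h, Bool.cond_true]
    omega
  · have hd : deriv b u k = false := by simp [deriv, h]
    rw [hd, Bool.cond_false]
    rcases hsp k with h1 | h1
    · omega
    · exact absurd h1 h

include hinf hsp hb in
lemma deriv_block (k : ℕ) :
    window u (Nat.nth (Ptrue u) k) (Nat.nth (Ptrue u) (k + 1) - Nat.nth (Ptrue u) k)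
      = psiL b (deriv b u k) := by
  have hspk := deriv_spacing hsp k
  cases hd : deriv b u k
  · rw [hd] at hspk
    simp only [cond] at hspk
    rw [show Nat.nth (Ptrue u) (k + 1) - Nat.nth (Ptrue u) k = (b - 1) + 1 by omega]
    rw [window_head_block hinf (by omega)]
    rfl
  · rw [hd] at hspk
    simp only [cond] at hspk
    rw [show Nat.nth (Ptrue u) (k + 1) - Nat.nth (Ptrue u) k = b + 1 by omega]
    rw [window_head_block hinf (by omega)]
    rfl

include hinf hsp hb in
lemma deriv_seg (k n : ℕ) :
    window u (Nat.nth (Ptrue u) k) (Nat.nth (Ptrue u) (k + n) - Nat.nth (Ptrue u) k)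
      = psiW b (window (deriv b u) k n) := by
  induction n with
  | zero => simp
  | succ n ih =>
    have hmono1 : Nat.nth (Ptrue u) k ≤ Nat.nth (Ptrue u) (k + n) :=
      Nat.nth_monotone hinf (by omega)
    have hmono2 : Nat.nth (Ptrue u) (k + n) < Nat.nth (Ptrue u) (k + n + 1) :=
      nth_spacing_pos hinf (k + n)
    rw [show Nat.nth (Ptrue u) (k + (n + 1)) - Nat.nth (Ptrue u) k
        = (Nat.nth (Ptrue u) (k + n) - Nat.nth (Ptrue u) k)
          + (Nat.nth (Ptrue u) (k + n + 1) - Nat.nth (Ptrue u) (k + n)) by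
        rw [show k + (n + 1) = (k + n) + 1 by omega]
        omega,
      window_add, show Nat.nth (Ptrue u) k + (Nat.nth (Ptrue u) (k + n)
        - Nat.nth (Ptrue u) k) = Nat.nth (Ptrue u) (k + n) by omega,
      ih, window_succ, psiW_append, deriv_block hinf hsp hb (k + n)]
    simp [psiW]

include hinf hsp hb in
lemma deriv_seg_true (k n : ℕ) :
    window u (Nat.nth (Ptrue u) k)
        (Nat.nth (Ptrue u) (k + n) - Nat.nth (Ptrue u) k + 1)
      = psiW b (window (deriv b u) k n) ++ [true] := by
  rw [window_succ, deriv_seg hinf hsp hb k n,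
    show Nat.nth (Ptrue u) k + (Nat.nth (Ptrue u) (k + n) - Nat.nth (Ptrue u) k)
      = Nat.nth (Ptrue u) (k + n) by
      have := Nat.nth_monotone hinf (show k ≤ k + n by omega)
      omega,
    nth_true hinf (k + n)]

include hsp in
lemma deriv_count_id (m : ℕ) :
    Nat.nth (Ptrue u) m
      = Nat.nth (Ptrue u) 0 + m * b + (window (deriv b u) 0 m).count true := by
  induction m with
  | zero => simp
  | succ m ih =>
    have hspm := deriv_spacing hsp m
    rw [window_succ, List.count_append, show (0 : ℕ) + m = m from Nat.zero_add m]
    cases hd : deriv b u m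
    · rw [hd] at hspm
      simp only [cond] at hspm
      have hc : (List.count true [false] : ℕ) = 0 := by simp
      rw [hc]
      have hmul : (m + 1) * b = m * b + b := by ring
      omega
    · rw [hd] at hspm
      simp only [cond] at hspm
      have hc : (List.count true [true] : ℕ) = 1 := by simp
      rw [hc]
      have hmul : (m + 1) * b = m * b + b := by ring
      omega

include hinf hsp in
lemma deriv_slope {β : ℝ} (hs : HasSlope u β) (hβpos : 0 < β) :
    HasSlope (deriv b u) (1 / β - b) := by
  have hnth_atTop : Tendsto (fun m => Nat.nth (Ptrue u) m) atTop atTop :=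
    (Nat.nth_strictMono hinf).tendsto_atTop
  have h1 : Tendsto (fun m : ℕ => ((Nat.count (Ptrue u) (Nat.nth (Ptrue u) m) : ℝ))
      / (Nat.nth (Ptrue u) m : ℝ)) atTop (nhds β) := by
    have := (hasSlope_count hs).comp hnth_atTop
    exact this
  have h2 : Tendsto (fun m : ℕ => (m : ℝ) / (Nat.nth (Ptrue u) m : ℝ)) atTop (nhds β) := by
    apply Tendsto.congr ?_ h1
    intro m
    rw [Nat.count_nth_of_infinite hinf]
  have h3 : Tendsto (fun m : ℕ => (Nat.nth (Ptrue u) m : ℝ) / (m : ℝ)) atTop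
      (nhds (1 / β)) := by
    have h4 := h2.inv₀ (ne_of_gt hβpos)
    rw [one_div]
    apply Tendsto.congr ?_ h4
    intro m
    rw [inv_div]
  unfold HasSlope
  have heq : (fun m : ℕ => (Nat.nth (Ptrue u) m : ℝ) / m - (Nat.nth (Ptrue u) 0 : ℝ) / m
      - b) =ᶠ[atTop] fun m : ℕ => ((((List.range m).map (deriv b u)).count true : ℝ) / m) := by
    filter_upwards [eventually_ge_atTop 1] with m hm
    have hmpos : (0 : ℝ) < m := by exact_mod_cast hm
    have hid := deriv_count_id hsp m
    rw [← window_zero_start]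
    have hcast : ((window (deriv b u) 0 m).count true : ℝ)
        = (Nat.nth (Ptrue u) m : ℝ) - (Nat.nth (Ptrue u) 0 : ℝ) - m * b := by
      rw [hid]
      push_cast
      ring
    rw [hcast]
    field_simp
  apply Tendsto.congr' heq
  have hlim : Tendsto (fun m : ℕ => (Nat.nth (Ptrue u) m : ℝ) / m
      - (Nat.nth (Ptrue u) 0 : ℝ) / m - b) atTop (nhds (1 / β - 0 - b)) :=
    (h3.sub (tendsto_const_div_atTop_nhds_zero_nat _)).sub tendsto_const_nhds
  rw [show 1 / β - 0 - (b : ℝ) = 1 / β - b by ring] at hlim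
  exact hlim

end derivsec

end St8

namespace St8

lemma window_drop {A : Type*} (f : ℕ → A) (i L m : ℕ) (hm : m ≤ L) :
    (window f i L).drop m = window f (i + m) (L - m) := by
  have h1 : window f i L = window f i m ++ window f (i + m) (L - m) := by
    rw [← window_add]
    congr 1
    omega
  rw [h1, List.drop_left' (window_length f i m)]

lemma factorOf_suffix {w s : List Bool} {f : ℕ → Bool}
    (hw : FactorOf w f) (hs : s <:+ w) : FactorOf s f := by
  obtain ⟨i, hi⟩ := hw
  obtain ⟨t, ht⟩ := hs
  have hlen : t.length + s.length = w.length := by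
    rw [← ht]
    simp
  have hwin : w = window f i w.length := hi
  have hdrop : s = (window f i w.length).drop t.length := by
    rw [← hwin, ← ht, List.drop_left]
  rw [window_drop f i w.length t.length (by omega)] at hdrop
  have hl2 : w.length - t.length = s.length := by omega
  rw [hl2] at hdrop
  rw [factorOf_iff]
  exact ⟨i + t.length, hdrop⟩

lemma rspec_suffix {f : ℕ → Bool} {n : ℕ} {w s : List Bool}
    (h : RSpec f n w) (hs : s <:+ w) : RSpec f s.length s := by
  obtain ⟨t, ht⟩ := hs
  refine ⟨rfl, ?_, ?_⟩
  · exact factorOf_suffix h.2.1 ⟨t, by rw [← List.append_assoc, ht]⟩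
  · exact factorOf_suffix h.2.2 ⟨t, by rw [← List.append_assoc, ht]⟩

lemma Fset_zero (f : ℕ → Bool) : Fset f 0 = {([] : List Bool)} := by
  ext v
  constructor
  · rintro ⟨hl, -⟩
    exact List.length_eq_zero_iff.1 hl
  · rintro rfl
    exact ⟨rfl, 0, rfl⟩

section derivsturm

variable {b : ℕ} {u : ℕ → Bool} (hinf : (setOf (Ptrue u)).Infinite)
  (hsp : ∀ k, Nat.nth (Ptrue u) (k + 1) = Nat.nth (Ptrue u) k + b ∨
      Nat.nth (Ptrue u) (k + 1) = Nat.nth (Ptrue u) k + (b + 1))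
  (hb : 1 ≤ b)

include hb in
lemma psiL_false_snoc : psiL b false ++ [false] = psiL b true := by
  rw [psiL_eq, psiL_eq]
  simp only [cond]
  rw [List.cons_append, ← List.replicate_succ']
  congr 2
  omega

include hinf hsp hb in
lemma deriv_factor_window {w : List Bool} {k : ℕ}
    (hw : w = window (deriv b u) k w.length) :
    psiW b w = window u (Nat.nth (Ptrue u) k)
      (Nat.nth (Ptrue u) (k + w.length) - Nat.nth (Ptrue u) k) := by
  rw [deriv_seg hinf hsp hb k w.length, ← hw]

include hinf hsp hb in
lemma deriv_rspec_transfer {n : ℕ} {w : List Bool} (h : RSpec (deriv b u) n w) :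
    RSpec u (psiW b (w ++ [false])).length (psiW b (w ++ [false])) := by
  obtain ⟨hlen, hf, ht⟩ := h
  refine ⟨rfl, ?_, ?_⟩
  · -- W ++ [false] = psiW b (w ++ [true]) is a factor
    obtain ⟨k, hk⟩ := ht
    have hlen2 : (w ++ [true]).length = n + 1 := by simp [hlen]
    have hwin := deriv_factor_window hinf hsp hb (w := w ++ [true]) (k := k) hk
    have hWeq : psiW b (w ++ [false]) ++ [false] = psiW b (w ++ [true]) := by
      rw [psiW_append, psiW_append]
      show (psiW b w ++ psiW b [false]) ++ [false] = psiW b w ++ psiW b [true]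
      rw [List.append_assoc]
      congr 1
      show (psiL b false ++ []) ++ [false] = psiL b true ++ []
      rw [List.append_nil, List.append_nil]
      exact psiL_false_snoc hb
    rw [hWeq, hwin]
    exact factorOf_window u _ _
  · -- W ++ [true] is a factor
    obtain ⟨k, hk⟩ := hf
    have hlen2 : (w ++ [false]).length = n + 1 := by simp [hlen]
    have hwin := deriv_seg_true hinf hsp hb k (n + 1)
    have hk' : w ++ [false] = window (deriv b u) k (n + 1) := by
      rw [← hlen2]
      exact hk
    rw [← hk'] at hwin
    rw [← hwin]
    exact factorOf_window u _ _

include hinf hsp hb in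
lemma deriv_rspec_unique (hu : Sturmian u) {n : ℕ} {w1 w2 : List Bool}
    (h1 : RSpec (deriv b u) n w1) (h2 : RSpec (deriv b u) n w2) : w1 = w2 := by
  by_contra hne
  have R1 := deriv_rspec_transfer hinf hsp hb h1
  have R2 := deriv_rspec_transfer hinf hsp hb h2
  set W1 := psiW b (w1 ++ [false]) with hW1
  set W2 := psiW b (w2 ++ [false]) with hW2
  have hWne : W1 ≠ W2 := by
    intro he
    apply hne
    have := psiW_inj b hb he
    exact List.append_inj_left' this (by rfl)
  -- helper to close the case L2 < L1 (W2 shorter)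
  have key : ∀ (x y : List Bool), x ≠ y →
      RSpec (deriv b u) n x → RSpec (deriv b u) n y →
      (psiW b (y ++ [false])).length < (psiW b (x ++ [false])).length → False := by
    intro x y hxy hx hy hlt
    have Rx := deriv_rspec_transfer hinf hsp hb hx
    have Ry := deriv_rspec_transfer hinf hsp hb hy
    set Wx := psiW b (x ++ [false]) with hWx
    set Wy := psiW b (y ++ [false]) with hWy
    set S := Wx.drop (Wx.length - Wy.length) with hS
    have hSsuf : S <:+ Wx := List.drop_suffix _ _
    have hSlen : S.length = Wy.length := by
      rw [hS, List.length_drop]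
      omega
    have RS : RSpec u S.length S := rspec_suffix Rx hSsuf
    by_cases hSW : S = Wy
    · -- block structure: Wy is a psi image suffix of Wx
      have hhead : Wy.head? = some true := by
        rcases psiW_head b (y ++ [false]) with hnil | ⟨t, htt⟩
        · exact absurd hnil (by simp)
        · rw [hWy, htt]
          rfl
      obtain ⟨w3, hw3suf, hw3⟩ := psiW_suffix b (hSW ▸ hSsuf) hhead
      have hw3eq : w3 = y ++ [false] := psiW_inj b hb (hw3.symm.trans hWy)
      have hsuf2 : y ++ [false] <:+ x ++ [false] := hw3eq ▸ hw3suf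
      have heq2 : y ++ [false] = x ++ [false] := by
        apply List.IsSuffix.eq_of_length hsuf2
        simp [hx.1, hy.1]
      exact hxy (List.append_inj_left' heq2.symm rfl)
    · -- two distinct right special factors of the same length in u
      have RW : RSpec u S.length Wy := by
        rw [hSlen]
        exact Ry
      exact not_two_rspec hu RS RW hSW
  rcases Nat.lt_trichotomy W1.length W2.length with hlt | heq | hgt
  · exact key w2 w1 (Ne.symm hne) h2 h1 hlt
  · have RW2 : RSpec u W1.length W2 := by
      rw [heq]
      exact R2
    exact not_two_rspec hu R1 RW2 hWne
  · exact key w1 w2 hne h1 h2 hgt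

include hinf hsp hb in
lemma deriv_sturmian (hu : Sturmian u) {α' : ℝ} (hαirr : Irrational α')
    (hs' : HasSlope (deriv b u) α') : Sturmian (deriv b u) := by
  rw [Sturmian_iff]
  have h0 : (Fset (deriv b u) 0).ncard = 1 := by
    rw [Fset_zero]
    exact Set.ncard_singleton _
  have hstep : ∀ n, (Fset (deriv b u) (n + 1)).ncard = (Fset (deriv b u) n).ncard + 1 := by
    intro n
    have hle : (Fset (deriv b u) (n + 1)).ncard ≤ (Fset (deriv b u) n).ncard + 1 :=
      Fset_ncard_succ_le (fun w1 w2 hw1 hw2 => deriv_rspec_unique hinf hsp hb hu hw1 hw2)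
    have hge : (Fset (deriv b u) n).ncard ≤ (Fset (deriv b u) (n + 1)).ncard :=
      Fset_ncard_mono _ n
    rcases Nat.lt_or_ge (Fset (deriv b u) n).ncard (Fset (deriv b u) (n + 1)).ncard
      with hlt | hge2
    · omega
    · exfalso
      have heqc : (Fset (deriv b u) (n + 1)).ncard = (Fset (deriv b u) n).ncard := by
        omega
      obtain ⟨i, d, hd, hper⟩ := exists_period heqc
      obtain ⟨q, hq⟩ := periodic_rational hd hper hs'
      exact hαirr ⟨q, hq⟩
  intro n
  induction n with
  | zero => exact h0
  | succ n ih => rw [hstep n, ih]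

end derivsturm

end St8

namespace St8

lemma count_window_add (f : ℕ → Bool) (i L : ℕ) :
    Nat.count (Ptrue f) (i + L) = Nat.count (Ptrue f) i + (window f i L).count true := by
  induction L with
  | zero => simp
  | succ L ih =>
    rw [show i + (L + 1) = (i + L) + 1 by omega, Nat.count_succ, ih, window_succ,
      List.count_append]
    cases hf : f (i + L)
    · rw [if_neg (by simp [Ptrue, hf])]
      simp
    · rw [if_pos (by simp [Ptrue, hf])]
      have : (List.count true [true] : ℕ) = 1 := by simp
      omega

lemma suffix_replicate_psiL (b : ℕ) {s : ℕ} (hs : s ≤ b) :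
    List.replicate s false <:+ psiL b true ∧ List.replicate s false ≠ psiL b true := by
  constructor
  · refine ⟨true :: List.replicate (b - s) false, ?_⟩
    rw [psiL_eq]
    simp only [cond]
    rw [List.cons_append, ← List.replicate_add]
    congr 2
    omega
  · intro h
    have := congrArg List.length h
    rw [psiL_eq] at this
    simp at this
    omega

lemma prefix_true_replicate_psiL (b : ℕ) {e : ℕ} (he : e < b) :
    (true :: List.replicate e false) <+: psiL b true ∧
      (true :: List.replicate e false) ≠ psiL b true := by
  constructor
  · refine ⟨List.replicate (b - e) false, ?_⟩
    rw [psiL_eq]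
    simp only [cond]
    rw [List.cons_append, ← List.replicate_add]
    congr 2
    omega
  · intro h
    have := congrArg List.length h
    rw [psiL_eq] at this
    simp at this
    omega

end St8

theorem stmt8 (b : ℕ) (hb : 1 ≤ b) (α : ℝ) (hαirr : Irrational α)
    (hα : α ∈ Set.Ioo (0 : ℝ) 1) (u : ℕ → Bool) (hu : Sturmian u)
    (hslope : HasSlope u (1 / (b + α))) (v : List Bool) (hv : FactorOf v u)
    (h2 : 2 ≤ v.count true) :
    ∃ (u' : ℕ → Bool) (v' vL vR : List Bool) (x y : Bool),
      Sturmian u' ∧ HasSlope u' α ∧ v' ≠ [] ∧ FactorOf v' u' ∧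
      (vL <:+ psiL b x ∧ vL ≠ psiL b x) ∧
      (vR <+: psiL b y ∧ vR ≠ psiL b y) ∧
      v = vL ++ psiW b v' ++ vR ∧
      palLen v ≤ 4 + palLen v' := by
  classical
  open St8 in
  obtain ⟨hα0, hα1⟩ := hα
  have hbR : (1 : ℝ) ≤ (b : ℝ) := by exact_mod_cast hb
  obtain ⟨hinf, hsp, hp0⟩ := St8.spacing_structure hb ⟨hα0, hα1⟩ hu hslope
  set u' := St8.deriv b u with hu'def
  have hβpos : (0 : ℝ) < 1 / ((b : ℝ) + α) := by positivity
  have hslope' : HasSlope u' α := by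
    have hds := St8.deriv_slope hinf hsp hslope hβpos
    rw [one_div_one_div] at hds
    rw [show (b : ℝ) + α - b = α by ring] at hds
    exact hds
  have hst' : Sturmian u' := St8.deriv_sturmian hinf hsp hb hu hαirr hslope'
  -- decomposition of v
  obtain ⟨i, hi⟩ := hv
  set L := v.length with hL
  have hiw : v = St8.window u i L := hi
  set k0 := Nat.count (St8.Ptrue u) i with hk0
  set m := v.count true with hm
  have hm2 : 2 ≤ m := h2
  have hcnt : Nat.count (St8.Ptrue u) (i + L) = k0 + m := by
    have h := St8.count_window_add u i L
    rw [← hiw] at h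
    exact h
  have hik0 : i ≤ Nat.nth (St8.Ptrue u) k0 := by
    by_contra hcon
    push_neg at hcon
    have := (Nat.lt_nth_iff_count_lt hinf (a := k0) (b := i)).2 hcon
    omega
  have hlast : Nat.nth (St8.Ptrue u) (k0 + m - 1) < i + L := by
    apply (Nat.lt_nth_iff_count_lt hinf).1
    omega
  have hnext : i + L ≤ Nat.nth (St8.Ptrue u) (k0 + m) := by
    apply (Nat.count_le_iff_le_nth hinf).1
    omega
  have hs_le : Nat.nth (St8.Ptrue u) k0 - i ≤ b := by
    rcases Nat.eq_zero_or_pos k0 with h0 | hpos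
    · rw [h0]
      omega
    · have hk' : Nat.nth (St8.Ptrue u) (k0 - 1) < i := by
        apply (Nat.lt_nth_iff_count_lt hinf).1
        omega
      have := hsp (k0 - 1)
      rw [show k0 - 1 + 1 = k0 by omega] at this
      omega
  set s := Nat.nth (St8.Ptrue u) k0 - i with hs
  set e := i + L - (Nat.nth (St8.Ptrue u) (k0 + m - 1) + 1) with he
  have hsp_last := hsp (k0 + m - 1)
  rw [show k0 + m - 1 + 1 = k0 + m by omega] at hsp_last
  have hmono_last : Nat.nth (St8.Ptrue u) (k0 + m - 1) < Nat.nth (St8.Ptrue u) (k0 + m) := by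
    have := St8.nth_spacing_pos hinf (k0 + m - 1)
    rw [show k0 + m - 1 + 1 = k0 + m by omega] at this
    exact this
  have he_le : e ≤ b := by omega
  -- zeros before the first 1 in the window
  have hzeros : St8.window u i s = List.replicate s false := by
    apply St8.window_false
    intro j hj1 hj2
    rcases Nat.eq_zero_or_pos k0 with h0 | hpos
    · apply St8.false_before hinf
      rw [← h0]
      omega
    · have hk' : Nat.nth (St8.Ptrue u) (k0 - 1) < i := by
        apply (Nat.lt_nth_iff_count_lt hinf).1
        omega
      apply St8.false_between hinf (k := k0 - 1)
      · omega
      · rw [show k0 - 1 + 1 = k0 by omega]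
        omega
  have hmono01 : Nat.nth (St8.Ptrue u) k0 ≤ Nat.nth (St8.Ptrue u) (k0 + m - 1) :=
    Nat.nth_monotone hinf (by omega)
  by_cases hcase : e = b
  · -- vR = [], v' has m letters
    have hend : i + L = Nat.nth (St8.Ptrue u) (k0 + m) := by omega
    refine ⟨u', St8.window u' k0 m, List.replicate s false, [], true, true,
      hst', hslope', ?_, St8.factorOf_window u' k0 m, St8.suffix_replicate_psiL b hs_le,
      ⟨⟨psiL b true, rfl⟩, by
        intro h
        have := congrArg List.length h
        rw [St8.psiL_eq] at this
        simp at this⟩, ?_, ?_⟩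
    · intro h
      have := congrArg List.length h
      rw [St8.window_length] at this
      simp at this
      omega
    · -- v = vL ++ psiW b v' ++ []
      rw [List.append_nil, hiw,
        show L = s + (Nat.nth (St8.Ptrue u) (k0 + m) - Nat.nth (St8.Ptrue u) k0) by omega,
        St8.window_add, hzeros, show i + s = Nat.nth (St8.Ptrue u) k0 by omega,
        St8.deriv_seg hinf hsp hb k0 m]
    · -- palindromic length
      apply St8.palLen_main_bound b ([] : List Bool) [] (by simp) rfl (by simp)
      · intro h
        have := congrArg List.length h
        rw [St8.window_length] at this
        simp at this
        omega
      · rw [List.append_nil, hiw,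
          show L = s + (Nat.nth (St8.Ptrue u) (k0 + m) - Nat.nth (St8.Ptrue u) k0) by omega,
          St8.window_add, hzeros, show i + s = Nat.nth (St8.Ptrue u) k0 by omega,
          St8.deriv_seg hinf hsp hb k0 m]
  · -- vR = true :: replicate e false, v' has m - 1 letters
    have he_lt : e < b := by omega
    have htail : St8.window u (Nat.nth (St8.Ptrue u) (k0 + m - 1)) (1 + e)
        = true :: List.replicate e false := by
      rw [St8.window_add, St8.window_one, St8.nth_true hinf (k0 + m - 1),
        St8.window_false u (Nat.nth (St8.Ptrue u) (k0 + m - 1) + 1) e ?_]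
      · rfl
      · intro j hj1 hj2
        apply St8.false_between hinf (k := k0 + m - 1)
        · omega
        · rw [show k0 + m - 1 + 1 = k0 + m by omega]
          omega
    have hveq : v = List.replicate s false ++ psiW b (St8.window u' k0 (m - 1))
        ++ (true :: List.replicate e false) := by
      rw [hiw, show L = s + ((Nat.nth (St8.Ptrue u) (k0 + m - 1) - Nat.nth (St8.Ptrue u) k0) + (1 + e)) by omega,
        St8.window_add, St8.window_add, hzeros, show i + s = Nat.nth (St8.Ptrue u) k0 by omega,
        show Nat.nth (St8.Ptrue u) k0 + (Nat.nth (St8.Ptrue u) (k0 + m - 1) - Nat.nth (St8.Ptrue u) k0)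
          = Nat.nth (St8.Ptrue u) (k0 + m - 1) by omega, htail,
        show Nat.nth (St8.Ptrue u) (k0 + m - 1) = Nat.nth (St8.Ptrue u) (k0 + (m - 1)) by congr 1; omega,
        St8.deriv_seg hinf hsp hb k0 (m - 1), List.append_assoc]
    refine ⟨u', St8.window u' k0 (m - 1), List.replicate s false,
      true :: List.replicate e false, true, true,
      hst', hslope', ?_, St8.factorOf_window u' k0 (m - 1),
      St8.suffix_replicate_psiL b hs_le, St8.prefix_true_replicate_psiL b he_lt, hveq, ?_⟩
    · intro h
      have := congrArg List.length h
      rw [St8.window_length] at this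
      simp at this
      omega
    · apply St8.palLen_main_bound b (true :: List.replicate e false)
        [[true], List.replicate e false] ?_ (by simp) (by simp) ?_ hveq
      · intro p hp
        simp only [List.mem_cons, List.mem_singleton, List.not_mem_nil, or_false] at hp
        rcases hp with rfl | rfl
        · rfl
        · exact St8.isPal_replicate e false
      · intro h
        have := congrArg List.length h
        rw [St8.window_length] at this
        simp at this
        omega
end
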